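/- arXiv:1808.10073 — 4 statements merged into one kernel-verified Lean document; each statement's English description precedes it below -/
import Mathlib

section
/- For every integer n ≥ 5, every real c ≥ 1, and every x ∈ [−c, c], one has | |x| − c·A_n(x/c) | ≤ 3·c·exp(−√n). -/
/-- `newmanAlpha n = exp(-1/√n)`. -/
noncomputable def newmanAlpha (n : ℕ) : ℝ := Real.exp (-1 / Real.sqrt n)

/-- The Newman polynomial `N_n(t) = ∏_{i=1}^{n-1} (t + α_n^i)`. -/
noncomputable def newmanPoly (n : ℕ) (t : ℝ) : ℝ :=
  ∏ i ∈ Finset.Icc 1 (n - 1), (t + (newmanAlpha n) ^ i)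

/-- The Newman approximant `A_n(t) = t (N_n(t) - N_n(-t)) / (N_n(t) + N_n(-t))`. -/
noncomputable def newmanApprox (n : ℕ) (t : ℝ) : ℝ :=
  t * (newmanPoly n t - newmanPoly n (-t)) / (newmanPoly n t + newmanPoly n (-t))


theorem aux_exp_factor (v : ℝ) (hv : 0 ≤ v) : 1 - v ≤ (1 + v) * Real.exp (-2 * v) := by
  have key : MonotoneOn (fun v : ℝ => (1 + v) * Real.exp (-2 * v) + v) (Set.Ici 0) := by
    have hd : ∀ w : ℝ, HasDerivAt (fun v : ℝ => (1 + v) * Real.exp (-2 * v) + v)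
        (1 * Real.exp (-2 * w) + (1 + w) * (Real.exp (-2 * w) * (-2)) + 1) w := by
      intro w
      have h1 : HasDerivAt (fun v : ℝ => 1 + v) 1 w := by
        simpa using (hasDerivAt_id w).const_add 1
      have h2 : HasDerivAt (fun v : ℝ => Real.exp (-2 * v)) (Real.exp (-2 * w) * (-2)) w := by
        have := ((hasDerivAt_id w).const_mul (-2 : ℝ)).exp
        simpa using this
      exact (h1.mul h2).add (hasDerivAt_id' w)
    apply monotoneOn_of_deriv_nonneg (convex_Ici 0)
    · exact (Continuous.continuousOn (by continuity))
    · intro w hw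
      exact (hd w).differentiableAt.differentiableWithinAt
    · intro w hw
      rw [(hd w).deriv]
      have hw0 : (0:ℝ) < w := by simpa using hw
      have h1 : (1 : ℝ) + 2*w ≤ Real.exp (2*w) := by
        have := Real.add_one_le_exp (2*w); linarith
      have h2 : Real.exp (-2*w) * Real.exp (2*w) = 1 := by
        rw [← Real.exp_add]; ring_nf; exact Real.exp_zero
      have h3 : Real.exp (-2*w) * (1 + 2*w) ≤ 1 := by
        calc Real.exp (-2*w) * (1 + 2*w) ≤ Real.exp (-2*w) * Real.exp (2*w) := by
              exact mul_le_mul_of_nonneg_left h1 (Real.exp_pos _).le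
          _ = 1 := h2
      nlinarith [Real.exp_pos (-2*w)]
  have h0 : ((fun v : ℝ => (1 + v) * Real.exp (-2 * v) + v) 0) ≤ ((fun v : ℝ => (1 + v) * Real.exp (-2 * v) + v) v) :=
    key (Set.self_mem_Ici) (Set.mem_Ici.2 hv) hv
  simp only [mul_zero, neg_zero, Real.exp_zero] at h0
  nlinarith [h0]


theorem aux_geom (s : ℝ) (h5 : 5 ≤ s^2) (hs : 0 < s) :
    s * (1 - Real.exp (-1/s)) ≤ 2 * (Real.exp (-1/s) - Real.exp (-s)) := by
  have hs1 : (2:ℝ) ≤ s := by nlinarith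
  set Q : ℝ := s^3 + s^2 + s/2 + 2/9 with hQ
  have hQpos : 0 < Q := by positivity
  have hub : Real.exp (1/s) ≤ Q / s^3 := by
    have h1 : |1/s| ≤ 1 := by
      rw [abs_of_pos (by positivity)]
      rw [div_le_one hs]; linarith
    have := Real.exp_bound h1 (n := 3) (by norm_num)
    have hsum : ∑ i ∈ Finset.range 3, (1/s)^i / (Nat.factorial i) = 1 + 1/s + (1/s)^2/2 := by
      simp [Finset.sum_range_succ, Nat.factorial]
    rw [hsum] at this
    have h2 : Real.exp (1/s) - (1 + 1/s + (1/s)^2/2) ≤ |1/s|^3 * ((3:ℕ).succ / ((Nat.factorial 3) * 3)) := by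
      calc Real.exp (1/s) - (1 + 1/s + (1/s)^2/2) ≤ |Real.exp (1/s) - (1 + 1/s + (1/s)^2/2)| := le_abs_self _
        _ ≤ _ := this
    rw [abs_of_pos (show (0:ℝ) < 1/s by positivity)] at h2
    have h3 : ((3:ℕ).succ : ℝ) / ((Nat.factorial 3) * 3) = 2/9 := by norm_num [Nat.factorial]
    rw [h3] at h2
    have hQs : Q / s^3 = 1 + 1/s + (1/s)^2/2 + (1/s)^3 * (2/9) := by
      field_simp; ring
    rw [hQs]; linarith
  have ha : s^3 / Q ≤ Real.exp (-1/s) := by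
    rw [show (-1/s : ℝ) = -(1/s) by ring, Real.exp_neg, ← one_div, ← one_div_div Q (s^3)]
    exact one_div_le_one_div_of_le (Real.exp_pos _) hub
  have hb : Real.exp (-s) ≤ 27 / (3+s)^3 := by
    have h1 : (1 + s/3)^3 ≤ Real.exp s := by
      have h2 : Real.exp (s/3) ^ 3 = Real.exp s := by
        rw [← Real.exp_nat_mul]; ring_nf
      rw [← h2]
      have h3 : 1 + s/3 ≤ Real.exp (s/3) := by
        have := Real.add_one_le_exp (s/3); linarith
      exact pow_le_pow_left₀ (by positivity) h3 3
    rw [Real.exp_neg]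
    have h4 : (1+s/3)^3 = (3+s)^3/27 := by ring
    rw [h4] at h1
    calc (Real.exp s)⁻¹ ≤ ((3+s)^3/27)⁻¹ := by
          apply inv_anti₀ (by positivity) h1
      _ = 27/(3+s)^3 := by rw [inv_div]
  -- polynomial inequality
  have key : s + 54/(3+s)^3 ≤ (2+s)*s^3/Q := by
    have hX : s + 54/(3+s)^3 = (s*(3+s)^3+54)/(3+s)^3 := by
      field_simp
    rw [le_div_iff₀ hQpos, hX, div_mul_eq_mul_div, div_le_iff₀ (by positivity : (0:ℝ) < (3+s)^3), hQ]
    nlinarith [sq_nonneg s, sq_nonneg (s^2-5), mul_pos hs hs, sq_nonneg (s-3),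
      mul_nonneg (mul_nonneg hs.le hs.le) (sub_nonneg.2 h5),
      mul_nonneg (sub_nonneg.2 h5) (sub_nonneg.2 h5),
      mul_nonneg (mul_nonneg (sub_nonneg.2 h5) (sub_nonneg.2 h5)) hs.le,
      mul_nonneg (mul_nonneg (mul_nonneg (sub_nonneg.2 h5) (sub_nonneg.2 h5)) hs.le) hs.le]
  -- combine
  have h6 : s * (s^3/Q) ≤ s * Real.exp (-1/s) := mul_le_mul_of_nonneg_left ha hs.le
  have h7 : (2+s) * s^3 / Q = s * (s^3/Q) + 2 * (s^3/Q) := by ring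
  have h8 : (2+s)*(s^3/Q) ≤ (2+s)*Real.exp (-1/s) :=
    mul_le_mul_of_nonneg_left ha (by linarith)
  have h9 : (2+s)*(s^3/Q) = (2+s)*s^3/Q := by ring
  have h10 : (2+s)*Real.exp (-1/s) = 2*Real.exp (-1/s) + s*Real.exp (-1/s) := by ring
  have h11 : s * (1 - Real.exp (-1/s)) = s - s*Real.exp (-1/s) := by ring
  have hcomb : s + 2*Real.exp (-s) ≤ (2+s) * Real.exp (-1/s) :=
    calc s + 2*Real.exp (-s)
        ≤ s + 54/(3+s)^3 := by
          have h54 : 54/(3+s)^3 = 2*(27/(3+s)^3) := by ring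
          rw [h54]; linarith
      _ ≤ (2+s)*s^3/Q := key
      _ = (2+s)*(s^3/Q) := h9.symm
      _ ≤ (2+s)*Real.exp (-1/s) := h8
  linarith [hcomb]

lemma sum_lower (n k : ℕ) (hn : 5 ≤ n) (hk : k ≤ n - 1) :
    Real.sqrt n ≤
      2 * ∑ i ∈ Finset.Icc 1 (n-1), newmanAlpha n ^ (if i ≤ k then k+1-i else i-k) := by
  set α := newmanAlpha n with hα
  have hα0 : 0 < α := Real.exp_pos _
  have hs0 : 0 < Real.sqrt n := Real.sqrt_pos.2 (by exact_mod_cast Nat.pos_of_ne_zero (by omega))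
  have hα1 : α < 1 := by
    rw [hα, newmanAlpha, Real.exp_lt_one_iff, neg_div]
    simp [hs0]
  -- rewrite Icc 1 (n-1) as Ioc 0 (n-1)
  have hIcc : Finset.Icc 1 (n-1) = Finset.Ioc 0 (n-1) := by
    ext i; simp [Nat.lt_iff_add_one_le]
  rw [hIcc]
  -- split the sum
  have hsplit : ∑ i ∈ Finset.Ioc 0 k, (fun i => α ^ (if i ≤ k then k+1-i else i-k)) i
      + ∑ i ∈ Finset.Ioc k (n-1), (fun i => α ^ (if i ≤ k then k+1-i else i-k)) i
      = ∑ i ∈ Finset.Ioc 0 (n-1), (fun i => α ^ (if i ≤ k then k+1-i else i-k)) i :=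
    Finset.sum_Ioc_consecutive _ (Nat.zero_le k) hk
  -- first sum equals sum of α^i over Ioc 0 k
  have h1 : ∑ i ∈ Finset.Ioc 0 k, α ^ (if i ≤ k then k+1-i else i-k)
      = ∑ i ∈ Finset.Ioc 0 k, α ^ i := by
    apply Finset.sum_nbij' (i := fun a => k+1-a) (j := fun a => k+1-a)
    · intro a ha; simp only [Finset.mem_Ioc] at ha ⊢; omega
    · intro a ha; simp only [Finset.mem_Ioc] at ha ⊢; omega
    · intro a ha; simp only [Finset.mem_Ioc] at ha; omega
    · intro a ha; simp only [Finset.mem_Ioc] at ha; omega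
    · intro a ha; simp only [Finset.mem_Ioc] at ha
      rw [if_pos (by omega)]
  -- second sum equals sum of α^i over Ioc 0 (n-1-k)
  have h2 : ∑ i ∈ Finset.Ioc k (n-1), α ^ (if i ≤ k then k+1-i else i-k)
      = ∑ i ∈ Finset.Ioc 0 (n-1-k), α ^ i := by
    apply Finset.sum_nbij' (i := fun a => a - k) (j := fun a => a + k)
    · intro a ha; simp only [Finset.mem_Ioc] at ha ⊢; omega
    · intro a ha; simp only [Finset.mem_Ioc] at ha ⊢; omega
    · intro a ha; simp only [Finset.mem_Ioc] at ha; omega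
    · intro a ha; simp only [Finset.mem_Ioc] at ha; omega
    · intro a ha; simp only [Finset.mem_Ioc] at ha
      rw [if_neg (by omega)]
  -- the tail sum is dominated
  have h3 : ∑ i ∈ Finset.Ioc k (n-1), α ^ i ≤ ∑ i ∈ Finset.Ioc 0 (n-1-k), α ^ i := by
    have e1 : ∑ i ∈ Finset.Ioc k (n-1), α ^ i = ∑ i ∈ Finset.Ioc 0 (n-1-k), α ^ (i+k) := by
      apply Finset.sum_nbij' (i := fun a => a - k) (j := fun a => a + k)
      · intro a ha; simp only [Finset.mem_Ioc] at ha ⊢; omega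
      · intro a ha; simp only [Finset.mem_Ioc] at ha ⊢; omega
      · intro a ha; simp only [Finset.mem_Ioc] at ha; omega
      · intro a ha; simp only [Finset.mem_Ioc] at ha; omega
      · intro a ha; simp only [Finset.mem_Ioc] at ha
        congr 1; omega
    rw [e1]
    apply Finset.sum_le_sum
    intro i _
    exact pow_le_pow_of_le_one hα0.le hα1.le (by omega)
  have hfull : ∑ i ∈ Finset.Ioc 0 (n-1), α ^ i
      ≤ ∑ i ∈ Finset.Ioc 0 (n-1), α ^ (if i ≤ k then k+1-i else i-k) := by
    have hsplit2 : ∑ i ∈ Finset.Ioc 0 k, α ^ i + ∑ i ∈ Finset.Ioc k (n-1), α ^ i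
        = ∑ i ∈ Finset.Ioc 0 (n-1), α ^ i :=
      Finset.sum_Ioc_consecutive _ (Nat.zero_le k) hk
    simp only [] at hsplit
    rw [← hsplit, h1, h2, ← hsplit2]
    linarith
  -- closed form for geometric sum
  have hgeom : ∑ i ∈ Finset.Ioc 0 (n-1), α ^ i = (α ^ n - 1)/(α - 1) - 1 := by
    have hr : Finset.range n = insert 0 (Finset.Ioc 0 (n-1)) := by
      ext i
      simp [Finset.mem_range, Finset.mem_insert, Finset.mem_Ioc]
      omega
    have := geom_sum_eq (ne_of_lt hα1) n
    rw [hr, Finset.sum_insert (by simp)] at this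
    simp at this
    linarith
  -- analytic bound
  have hA := aux_geom (Real.sqrt n) (by rw [Real.sq_sqrt (by positivity : (0:ℝ) ≤ (n:ℝ))]; exact_mod_cast hn) hs0
  have hαn : α ^ n = Real.exp (-Real.sqrt n) := by
    rw [hα, newmanAlpha, ← Real.exp_nat_mul]
    congr 1
    have h2 : Real.sqrt n * Real.sqrt n = n := Real.mul_self_sqrt (by positivity)
    field_simp
    nlinarith [h2]
  have hαe : α = Real.exp (-1/Real.sqrt n) := rfl
  have hge : Real.sqrt n ≤ 2 * ((α ^ n - 1)/(α - 1) - 1) := by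
    have h1α : 0 < 1 - α := by linarith
    have heq : (α ^ n - 1)/(α - 1) - 1 = (α - α^n)/(1-α) := by
      rw [div_sub' (by linarith : α - 1 ≠ 0)]
      rw [div_eq_div_iff (by linarith : α - 1 ≠ 0) (by linarith : (1:ℝ) - α ≠ 0)]
      ring
    rw [heq]
    have h2 : 2 * ((α - α^n)/(1-α)) = (2*(α - α^n))/(1-α) := by ring
    rw [h2, le_div_iff₀ h1α]
    rw [hαn, hαe]
    linarith
  calc Real.sqrt n ≤ 2 * ((α ^ n - 1)/(α - 1) - 1) := hge
    _ = 2 * ∑ i ∈ Finset.Ioc 0 (n-1), α ^ i := by rw [hgeom]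
    _ ≤ _ := by linarith [hfull]

lemma newman_ratio (n : ℕ) (hn : 5 ≤ n) (t : ℝ) (ht1 : Real.exp (-Real.sqrt n) ≤ t)
    (ht2 : t ≤ 1) :
    |newmanPoly n (-t)| ≤ Real.exp (-Real.sqrt n) * newmanPoly n t := by
  classical
  set α := newmanAlpha n with hα
  have hα0 : 0 < α := Real.exp_pos _
  have hs0 : 0 < Real.sqrt n := Real.sqrt_pos.2 (by exact_mod_cast Nat.pos_of_ne_zero (by omega))
  have hα1 : α < 1 := by
    rw [hα, newmanAlpha, Real.exp_lt_one_iff, neg_div]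
    simp [hs0]
  have hαn : α ^ n = Real.exp (-Real.sqrt n) := by
    rw [hα, newmanAlpha, ← Real.exp_nat_mul]
    congr 1
    have h2 : Real.sqrt n * Real.sqrt n = n := Real.mul_self_sqrt (by positivity)
    field_simp
    nlinarith [h2]
  have ht0 : 0 < t := lt_of_lt_of_le (Real.exp_pos _) ht1
  set k := Nat.findGreatest (fun k => t ≤ α^k) (n-1) with hkdef
  have hkle : k ≤ n-1 := Nat.findGreatest_le _
  have hk1 : t ≤ α^k := by
    have h := Nat.findGreatest_spec (P := fun m => t ≤ α^m) (m := 0) (Nat.zero_le (n-1))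
      (by simpa using ht2)
    simpa [hkdef] using h
  have hk2 : α^(k+1) ≤ t := by
    by_cases h : k = n-1
    · have he : k + 1 = n := by omega
      rw [he, hαn]; exact ht1
    · have hlt : k < n-1 := lt_of_le_of_ne hkle h
      have hng := Nat.findGreatest_is_greatest (Nat.lt_succ_self k) (by omega :  k+1 ≤ n-1)
      push_neg at hng
      exact hng.le
  -- pointwise bound
  have point : ∀ i ∈ Finset.Icc 1 (n-1),
      |(-t) + α^i| ≤ (t + α^i) * Real.exp (-2*α^(if i ≤ k then k+1-i else i-k)) := by
    intro i hi
    simp only [Finset.mem_Icc] at hi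
    set v : ℝ := α^(if i ≤ k then k+1-i else i-k) with hv
    have hv0 : 0 < v := pow_pos hα0 _
    have hF2 : 1 - v ≤ (1+v) * Real.exp (-2*v) := aux_exp_factor v hv0.le
    have hF1 : |(-t) + α^i| * (1+v) ≤ (t + α^i) * (1-v) := by
      by_cases hik : i ≤ k
      · rw [hv, if_pos hik]
        have hti : t ≤ α^i := le_trans hk1 (pow_le_pow_of_le_one hα0.le hα1.le hik)
        have he : (-t) + α^i = α^i - t := by ring
        rw [he, abs_of_nonneg (by linarith)]
        have hmul : α^i * α^(k+1-i) = α^(k+1) := by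
          rw [← pow_add]; congr 1; omega
        nlinarith [hk2, pow_pos hα0 (k+1-i)]
      · rw [hv, if_neg hik]
        have hti : α^i ≤ t :=
          le_trans (pow_le_pow_of_le_one hα0.le hα1.le (by omega : k+1 ≤ i)) hk2
        have he : (-t) + α^i = -(t - α^i) := by ring
        rw [he, abs_neg, abs_of_nonneg (by linarith)]
        have hmul : α^k * α^(i-k) = α^i := by
          rw [← pow_add]; congr 1; omega
        have hle : t * α^(i-k) ≤ α^k * α^(i-k) :=
          mul_le_mul_of_nonneg_right hk1 (pow_nonneg hα0.le _)
        nlinarith [hle, hmul]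
    have hta : 0 ≤ t + α^i := by positivity
    have step : |(-t) + α^i| * (1+v) ≤ ((t + α^i) * Real.exp (-2*v)) * (1+v) := by
      calc |(-t) + α^i| * (1+v) ≤ (t + α^i) * (1-v) := hF1
        _ ≤ (t + α^i) * ((1+v) * Real.exp (-2*v)) := mul_le_mul_of_nonneg_left hF2 hta
        _ = ((t + α^i) * Real.exp (-2*v)) * (1+v) := by ring
    exact le_of_mul_le_mul_right step (by positivity)
  -- assemble
  have habs : |newmanPoly n (-t)| = ∏ i ∈ Finset.Icc 1 (n-1), |(-t) + α^i| := by
    rw [newmanPoly, Finset.abs_prod]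
  have hprod : ∏ i ∈ Finset.Icc 1 (n-1), |(-t) + α^i|
      ≤ ∏ i ∈ Finset.Icc 1 (n-1),
          ((t + α^i) * Real.exp (-2*α^(if i ≤ k then k+1-i else i-k))) :=
    Finset.prod_le_prod (fun i _ => abs_nonneg _) point
  have hsplit : ∏ i ∈ Finset.Icc 1 (n-1),
      ((t + α^i) * Real.exp (-2*α^(if i ≤ k then k+1-i else i-k)))
      = newmanPoly n t * Real.exp (∑ i ∈ Finset.Icc 1 (n-1),
          (-2*α^(if i ≤ k then k+1-i else i-k))) := by
    rw [Finset.prod_mul_distrib, Real.exp_sum, newmanPoly]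
  have hsum : ∑ i ∈ Finset.Icc 1 (n-1), (-2*α^(if i ≤ k then k+1-i else i-k))
      ≤ -Real.sqrt n := by
    have h := sum_lower n k hn hkle
    rw [← hα] at h
    have hs2 : ∑ i ∈ Finset.Icc 1 (n-1), (-2*α^(if i ≤ k then k+1-i else i-k))
        = -2 * ∑ i ∈ Finset.Icc 1 (n-1), α^(if i ≤ k then k+1-i else i-k) := by
      rw [Finset.mul_sum]
    rw [hs2]
    linarith
  calc |newmanPoly n (-t)| = _ := habs
    _ ≤ _ := hprod
    _ = _ := hsplit
    _ ≤ newmanPoly n t * Real.exp (-Real.sqrt n) := by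
        apply mul_le_mul_of_nonneg_left (Real.exp_le_exp.2 hsum)
        exact le_of_lt (by apply Finset.prod_pos; intro i _; positivity)
    _ = Real.exp (-Real.sqrt n) * newmanPoly n t := mul_comm _ _

lemma approx_even (n : ℕ) (u : ℝ) : newmanApprox n (-u) = newmanApprox n u := by
  rw [newmanApprox, newmanApprox, neg_neg]
  ring

lemma core_bound (n : ℕ) (hn : 5 ≤ n) (t : ℝ) (h0 : 0 ≤ t) (h1 : t ≤ 1) :
    |t - newmanApprox n t| ≤ 3 * Real.exp (-Real.sqrt n) := by
  have hα0 : 0 < newmanAlpha n := Real.exp_pos _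
  have hs0 : 0 < Real.sqrt n := Real.sqrt_pos.2 (by exact_mod_cast Nat.pos_of_ne_zero (by omega))
  have hα1 : newmanAlpha n < 1 := by
    rw [newmanAlpha, Real.exp_lt_one_iff, neg_div]
    simp [hs0]
  have hαn : newmanAlpha n ^ n = Real.exp (-Real.sqrt n) := by
    rw [newmanAlpha, ← Real.exp_nat_mul]
    congr 1
    have h2 : Real.sqrt n * Real.sqrt n = n := Real.mul_self_sqrt (by positivity)
    field_simp
    nlinarith [h2]
  set ρ := Real.exp (-Real.sqrt n) with hρ
  have hρ0 : 0 < ρ := Real.exp_pos _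
  have hρ3 : ρ ≤ 1/3 := by
    have h2 : (2:ℝ) ≤ Real.sqrt n := by
      rw [show (2:ℝ) = Real.sqrt 4 by
        rw [show (4:ℝ) = 2^2 by norm_num, Real.sqrt_sq (by norm_num)]]
      exact Real.sqrt_le_sqrt (by exact_mod_cast (by omega : 4 ≤ n))
    have h3 : ρ ≤ Real.exp (-2) := Real.exp_le_exp.2 (by linarith)
    have h4 : (3:ℝ) ≤ Real.exp 2 := by
      have := Real.add_one_le_exp (2:ℝ); linarith
    have h5 : Real.exp (-2) ≤ 1/3 := by
      rw [Real.exp_neg]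
      rw [inv_le_comm₀ (Real.exp_pos _) (by norm_num)]
      simpa using h4
    linarith
  have hNt : 0 < newmanPoly n t := by
    apply Finset.prod_pos; intro i _
    have := pow_pos hα0 i; linarith
  by_cases hc : t ≤ ρ
  · -- small t
    have hNm0 : 0 ≤ newmanPoly n (-t) := by
      apply Finset.prod_nonneg; intro i hi
      simp only [Finset.mem_Icc] at hi
      have h5 : newmanAlpha n ^ n ≤ newmanAlpha n ^ i :=
        pow_le_pow_of_le_one hα0.le hα1.le (by omega)
      rw [hαn] at h5
      linarith
    have hNmt : newmanPoly n (-t) ≤ newmanPoly n t := by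
      apply Finset.prod_le_prod
      · intro i hi
        simp only [Finset.mem_Icc] at hi
        have h5 : newmanAlpha n ^ n ≤ newmanAlpha n ^ i :=
          pow_le_pow_of_le_one hα0.le hα1.le (by omega)
        rw [hαn] at h5
        linarith
      · intro i _; linarith
    have hD : 0 < newmanPoly n t + newmanPoly n (-t) := by linarith
    have hA0 : 0 ≤ newmanApprox n t := by
      rw [newmanApprox]
      apply div_nonneg _ hD.le
      apply mul_nonneg h0
      linarith
    have hAt : newmanApprox n t ≤ t := by
      rw [newmanApprox, div_le_iff₀ hD]
      nlinarith
    rw [abs_of_nonneg (by linarith)]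
    linarith
  · -- large t
    push_neg at hc
    have key := newman_ratio n hn t hc.le h1
    have ht0 : 0 < t := lt_trans hρ0 hc
    set Nt := newmanPoly n t
    set Nm := newmanPoly n (-t)
    have hDl : (1-ρ)*Nt ≤ Nt + Nm := by
      have := neg_abs_le Nm
      nlinarith
    have hDpos : 0 < Nt + Nm := by nlinarith
    have hEq : t - newmanApprox n t = 2*t*Nm/(Nt+Nm) := by
      rw [show newmanApprox n t = t * (Nt - Nm) / (Nt + Nm) from rfl]
      field_simp
      ring
    rw [hEq, abs_div, abs_of_pos hDpos]
    have hnum : |2*t*Nm| ≤ 2*ρ*Nt := by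
      rw [abs_mul, abs_of_pos (by linarith : (0:ℝ) < 2*t)]
      calc 2*t*|Nm| ≤ 2*1*(ρ*Nt) := by
            apply mul_le_mul (by nlinarith) key (abs_nonneg _) (by norm_num)
        _ = 2*ρ*Nt := by ring
    calc |2*t*Nm|/(Nt+Nm) ≤ (2*ρ*Nt)/((1-ρ)*Nt) := by
          apply div_le_div₀ (by positivity) hnum (by nlinarith) hDl
      _ = (2*ρ)/(1-ρ) := mul_div_mul_right _ _ (ne_of_gt hNt)
      _ ≤ 3*ρ := by
          rw [div_le_iff₀ (by linarith)]
          nlinarith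

/-- Lemma 1 (σ = 0): rational approximation of `|x|` on `[-c, c]`. -/
theorem abs_sub_newmanApprox_le (n : ℕ) (hn : 5 ≤ n) (c : ℝ) (hc : 1 ≤ c)
    (x : ℝ) (hx : x ∈ Set.Icc (-c) c) :
    |(|x| : ℝ) - c * newmanApprox n (x / c)| ≤ 3 * c * Real.exp (-Real.sqrt n) := by
  have hc0 : 0 < c := by linarith
  obtain ⟨hx1, hx2⟩ := hx
  have ht : |x/c| ≤ 1 := by
    rw [abs_div, abs_of_pos hc0, div_le_one hc0]
    rw [abs_le]; exact ⟨hx1, hx2⟩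
  have heven : newmanApprox n (x/c) = newmanApprox n |x/c| := by
    rcases le_or_gt 0 (x/c) with h | h
    · rw [abs_of_nonneg h]
    · rw [abs_of_neg h, approx_even]
  have habs : |x| = c * |x/c| := by
    rw [abs_div, abs_of_pos hc0]
    field_simp
  rw [heven, habs, ← mul_sub, abs_mul, abs_of_pos hc0]
  have hcore := core_bound n hn |x/c| (abs_nonneg _) ht
  have h2 : c * |(|x/c|) - newmanApprox n (|x/c|)| ≤ c * (3 * Real.exp (-Real.sqrt n)) :=
    mul_le_mul_of_nonneg_left hcore hc0.le
  linarith
end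

section
/- For every integer n ≥ 5 and all reals a, b, c with b ≥ 1 and c ≥ 1, there exist real polynomials P and Q, each of degree at most n + 1, such that Q(x) ≠ 0 for all x ∈ [−c, c] and sup_{x ∈ [−c,c]} | (a·x + b·|x|) − P(x)/Q(x) | ≤ 3·b·c·exp(−√n). (An explicit witness is the rational function R(x) = a·x + b·c·A_n(x/c).) -/
set_option maxHeartbeats 1000000

open Finset

lemma tanh_bound (u : ℝ) (hu : 0 ≤ u) :
    (1 - u) * Real.exp u ≤ (1 + u) * Real.exp (-u) := by
  set f : ℝ → ℝ := fun v => (1 + v) * Real.exp (-v) - (1 - v) * Real.exp v with hf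
  have hderiv : ∀ v : ℝ, HasDerivAt f (v * (Real.exp v - Real.exp (-v))) v := by
    intro v
    have h1 : HasDerivAt (fun v : ℝ => (1 + v) * Real.exp (-v))
        (1 * Real.exp (-v) + (1 + v) * (Real.exp (-v) * (-1))) v :=
      ((hasDerivAt_id v).const_add 1).mul ((hasDerivAt_id v).neg.exp)
    have h2 : HasDerivAt (fun v : ℝ => (1 - v) * Real.exp v)
        ((-1) * Real.exp v + (1 - v) * Real.exp v) v := by
      have := ((hasDerivAt_id v).const_sub 1).mul (Real.hasDerivAt_exp v)
      exact this
    have h3 := h1.sub h2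
    exact h3.congr_deriv (by ring)
  have hmono : MonotoneOn f (Set.Ici (0:ℝ)) := by
    apply monotoneOn_of_deriv_nonneg (convex_Ici 0)
    · exact fun v _ => (hderiv v).differentiableAt.continuousAt.continuousWithinAt
    · intro v _
      exact (hderiv v).differentiableAt.differentiableWithinAt
    · intro v hv
      rw [(hderiv v).deriv]
      rw [interior_Ici] at hv
      have hv' : (0:ℝ) < v := hv
      have : Real.exp (-v) ≤ Real.exp v := Real.exp_le_exp.2 (by linarith)
      nlinarith
  have h0 : f 0 = 0 := by simp [hf]
  have := hmono (Set.self_mem_Ici) (Set.mem_Ici.2 hu) hu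
  rw [h0] at this
  simp only [hf] at this
  linarith


lemma sqrt_ge_of_five {n : ℕ} (hn : 5 ≤ n) : (20/9 : ℝ) ≤ Real.sqrt n := by
  have h5 : (5:ℝ) ≤ (n:ℝ) := by exact_mod_cast hn
  have : ((20/9:ℝ))^2 ≤ (n:ℝ) := by nlinarith
  rw [show (20/9:ℝ) = Real.sqrt ((20/9)^2) by rw [Real.sqrt_sq (by norm_num)]]
  exact Real.sqrt_le_sqrt this

lemma exp_nine_twenty : Real.exp (9/20 : ℝ) ≤ 1.5686 := by
  have h := Real.exp_bound' (x := (9/20:ℝ)) (by norm_num) (by norm_num) (n := 4) (by norm_num)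
  have : (∑ m ∈ Finset.range 4, (9/20:ℝ) ^ m / m.factorial) +
      (9/20:ℝ) ^ 4 * (4 + 1) / (Nat.factorial 4 * 4) ≤ 1.5686 := by
    simp [Finset.sum_range_succ, Nat.factorial]
    norm_num
  linarith

lemma exp_319_180 : (5.19 : ℝ) ≤ Real.exp (319/180 : ℝ) := by
  have h := Real.sum_le_exp_of_nonneg (x := (319/180:ℝ)) (by norm_num) 4
  have : (5.19:ℝ) ≤ ∑ i ∈ Finset.range 4, (319/180:ℝ) ^ i / i.factorial := by
    simp [Finset.sum_range_succ, Nat.factorial]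
    norm_num
  linarith

lemma exp_two_ge : (3:ℝ) ≤ Real.exp 2 := by
  have := Real.add_one_le_exp (2:ℝ)
  linarith

section alphafacts
variable {n : ℕ} (hn : 5 ≤ n)

lemma alpha_pos : 0 < newmanAlpha n := Real.exp_pos _

include hn

lemma sqrtn_pos : 0 < Real.sqrt n := lt_of_lt_of_le (by norm_num) (sqrt_ge_of_five hn)

lemma alpha_lt_one : newmanAlpha n < 1 := by
  rw [newmanAlpha]
  rw [Real.exp_lt_one_iff]
  have := sqrtn_pos hn
  rw [div_neg_iff]
  right; constructor <;> linarith

lemma one_sub_alpha_le : 1 - newmanAlpha n ≤ 1 / Real.sqrt n := by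
  have := Real.add_one_le_exp (-1 / Real.sqrt n)
  rw [newmanAlpha]
  have hs := sqrtn_pos hn
  have : -1 / Real.sqrt n = -(1 / Real.sqrt n) := by ring
  nlinarith [Real.add_one_le_exp (-1 / Real.sqrt n)]

lemma alpha_ge_637 : (0.637 : ℝ) ≤ newmanAlpha n := by
  have hs := sqrt_ge_of_five hn
  have hs0 := sqrtn_pos hn
  have h1 : (-9/20 : ℝ) ≤ -1 / Real.sqrt n := by
    rw [div_le_div_iff₀ (by norm_num) hs0]
    nlinarith
  have h2 : Real.exp (-9/20 : ℝ) ≤ newmanAlpha n := by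
    rw [newmanAlpha]; exact Real.exp_le_exp.2 h1
  have h3 : (0.637 : ℝ) ≤ Real.exp (-9/20 : ℝ) := by
    have key : Real.exp (-9/20:ℝ) * Real.exp (9/20:ℝ) = 1 := by
      rw [← Real.exp_add]; norm_num
    nlinarith [exp_nine_twenty, Real.exp_pos (-9/20:ℝ), Real.exp_pos (9/20:ℝ)]
  linarith

lemma alpha_pow_eq : newmanAlpha n ^ (n - 1) =
    Real.exp (1 / Real.sqrt n - Real.sqrt n) := by
  rw [newmanAlpha, ← Real.exp_nat_mul]
  congr 1
  have hs0 := sqrtn_pos hn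
  have hs2 : Real.sqrt n * Real.sqrt n = (n:ℝ) := Real.mul_self_sqrt (Nat.cast_nonneg n)
  have hcast : ((n - 1 : ℕ) : ℝ) = (n : ℝ) - 1 := by
    have : 1 ≤ n := by omega
    push_cast [this]; ring
  rw [hcast]
  field_simp
  nlinarith [hs2]

lemma alpha_pow_le_193 : newmanAlpha n ^ (n - 1) ≤ 0.193 := by
  rw [alpha_pow_eq hn]
  have hs := sqrt_ge_of_five hn
  have hs0 := sqrtn_pos hn
  have h1 : 1 / Real.sqrt n - Real.sqrt n ≤ -(319/180 : ℝ) := by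
    rw [div_sub' (ne_of_gt hs0), div_le_iff₀ hs0]
    nlinarith
  have h2 : Real.exp (1 / Real.sqrt n - Real.sqrt n) ≤ Real.exp (-(319/180:ℝ)) :=
    Real.exp_le_exp.2 h1
  have h3 : Real.exp (-(319/180:ℝ)) ≤ 0.193 := by
    have key : Real.exp (-(319/180:ℝ)) * Real.exp (319/180:ℝ) = 1 := by
      rw [← Real.exp_add]; norm_num
    nlinarith [exp_319_180, Real.exp_pos (-(319/180:ℝ)), Real.exp_pos (319/180:ℝ)]
  linarith

lemma exp_neg_sqrt_le_third : Real.exp (-Real.sqrt n) ≤ 1/3 := by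
  have hs := sqrt_ge_of_five hn
  have h1 : Real.exp (-Real.sqrt n) ≤ Real.exp (-2 : ℝ) :=
    Real.exp_le_exp.2 (by linarith)
  have h2 : Real.exp (-2:ℝ) ≤ 1/3 := by
    have key : Real.exp (-2:ℝ) * Real.exp (2:ℝ) = 1 := by
      rw [← Real.exp_add]; norm_num
    nlinarith [exp_two_ge, Real.exp_pos (-2:ℝ), Real.exp_pos (2:ℝ)]
  linarith

lemma exp_neg_sqrt_lt_one : Real.exp (-Real.sqrt n) < 1 := by
  rw [Real.exp_lt_one_iff]
  have := sqrtn_pos hn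
  linarith

end alphafacts

lemma geom_tail (a : ℝ) (m : ℕ) :
    (1 - a) * ∑ j ∈ Finset.Ioc 0 m, a ^ j = a * (1 - a ^ m) := by
  induction m with
  | zero => simp
  | succ m ih =>
    rw [Finset.sum_Ioc_succ_top (Nat.zero_le _), mul_add, ih, pow_succ]
    ring


lemma newman_prod_bound {n : ℕ} (hn : 5 ≤ n) {t : ℝ}
    (h1 : newmanAlpha n ^ (n-1) ≤ t) (h2 : t ≤ 1) :
    ∏ i ∈ Finset.Icc 1 (n-1), |t - newmanAlpha n ^ i| ≤
      Real.exp (-Real.sqrt n) * ∏ i ∈ Finset.Icc 1 (n-1), (t + newmanAlpha n ^ i) := by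
  classical
  set α := newmanAlpha n with hαdef
  have hα0 : 0 < α := alpha_pos
  have hα1 : α < 1 := alpha_lt_one hn
  have ht0 : 0 < t := lt_of_lt_of_le (pow_pos hα0 _) h1
  -- find the index k with α^(k+1) ≤ t ≤ α^k
  have hex : ∃ j, α ^ (j+1) ≤ t := ⟨n-2, by rwa [show n-2+1 = n-1 by omega]⟩
  obtain ⟨k, hk1, hk2, hkle⟩ : ∃ k, α ^ (k+1) ≤ t ∧ t ≤ α ^ k ∧ k ≤ n - 2 := by
    refine ⟨Nat.find hex, Nat.find_spec hex, ?_, Nat.find_min' hex (by rwa [show n-2+1 = n-1 by omega])⟩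
    rcases Nat.eq_zero_or_pos (Nat.find hex) with h | h
    · rw [h, pow_zero]; exact h2
    · have hmin := Nat.find_min hex (show Nat.find hex - 1 < Nat.find hex by omega)
      rw [show Nat.find hex - 1 + 1 = Nat.find hex by omega] at hmin
      push_neg at hmin
      exact le_of_lt hmin
  -- the per-factor bound
  have hfac : ∀ i ∈ Finset.Icc 1 (n-1),
      |t - α ^ i| ≤ Real.exp (-2 * α ^ (if i ≤ k then k+1-i else i-k)) * (t + α ^ i) := by
    intro i hi
    rw [Finset.mem_Icc] at hi
    set w := if i ≤ k then k+1-i else i-k with hw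
    set u := α ^ w with hu
    have hu0 : 0 < u := pow_pos hα0 _
    have hX : 0 < t + α ^ i := by positivity
    have hB : 1 - u ≤ (1 + u) * Real.exp (-2*u) := by
      have htanh := tanh_bound u hu0.le
      have he : Real.exp u * Real.exp (-u) = 1 := by rw [← Real.exp_add]; simp
      have he2 : Real.exp (-u) * Real.exp (-u) = Real.exp (-2*u) := by
        rw [← Real.exp_add]; ring_nf
      nlinarith [Real.exp_pos (-u), Real.exp_pos u]
    have hA : |t - α ^ i| * (1 + u) ≤ (1 - u) * (t + α ^ i) := by
      by_cases hik : i ≤ k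
      · have hwi : w = k+1-i := if_pos hik
        have hprod : α ^ i * u = α ^ (k+1) := by
          rw [hu, hwi, ← pow_add]; congr 1; omega
        have hti : t ≤ α ^ i := le_trans hk2 (pow_le_pow_of_le_one hα0.le hα1.le hik)
        rw [abs_of_nonpos (by linarith)]
        nlinarith
      · have hik' : k + 1 ≤ i := by omega
        have hwi : w = i - k := if_neg hik
        have hprod : α ^ k * u = α ^ i := by
          rw [hu, hwi, ← pow_add]; congr 1; omega
        have hti : α ^ i ≤ t :=
          le_trans (pow_le_pow_of_le_one hα0.le hα1.le hik') hk1
        rw [abs_of_nonneg (by linarith)]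
        nlinarith
    have hBX := mul_le_mul_of_nonneg_right hB hX.le
    have h1u : (0:ℝ) < 1 + u := by linarith
    rw [← mul_le_mul_iff_right₀ h1u]
    calc (1+u) * |t - α ^ i| = |t - α ^ i| * (1+u) := by ring
      _ ≤ (1 - u) * (t + α ^ i) := hA
      _ ≤ (1 + u) * Real.exp (-2*u) * (t + α ^ i) := hBX
      _ = (1 + u) * (Real.exp (-2*u) * (t + α ^ i)) := by ring
  -- the product bound
  have hprodle := Finset.prod_le_prod (fun i _ => abs_nonneg (t - α ^ i)) hfac
  rw [Finset.prod_mul_distrib, ← Real.exp_sum] at hprodle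
  set T := ∑ i ∈ Finset.Icc 1 (n-1), α ^ (if i ≤ k then k+1-i else i-k) with hT
  have hsum : ∑ i ∈ Finset.Icc 1 (n-1), (-2 * α ^ (if i ≤ k then k+1-i else i-k)) = -2 * T := by
    rw [hT, Finset.mul_sum]
  have hTval : T = (∑ j ∈ Finset.Ioc 0 k, α ^ j) + ∑ j ∈ Finset.Ioc 0 (n-1-k), α ^ j := by
    rw [hT, show Finset.Icc 1 (n-1) = Finset.Ioc 0 (n-1) from Finset.Icc_add_one_left_eq_Ioc 0 (n-1),
      ← Finset.sum_Ioc_consecutive _ (Nat.zero_le k) (show k ≤ n-1 by omega)]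
    congr 1
    · rw [show ∑ i ∈ Finset.Ioc 0 k, α ^ (if i ≤ k then k+1-i else i-k)
          = ∑ i ∈ Finset.Ioc 0 k, α ^ (k+1-i) from
        Finset.sum_congr rfl (fun i hi => by
          rw [Finset.mem_Ioc] at hi; rw [if_pos hi.2])]
      refine Finset.sum_nbij' (fun i => k+1-i) (fun j => k+1-j) ?_ ?_ ?_ ?_ ?_
      · intro i hi; simp only [Finset.mem_Ioc] at hi ⊢; omega
      · intro j hj; simp only [Finset.mem_Ioc] at hj ⊢; omega
      · intro i hi; simp only [Finset.mem_Ioc] at hi; omega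
      · intro j hj; simp only [Finset.mem_Ioc] at hj; omega
      · intro i _; rfl
    · rw [show ∑ i ∈ Finset.Ioc k (n-1), α ^ (if i ≤ k then k+1-i else i-k)
          = ∑ i ∈ Finset.Ioc k (n-1), α ^ (i-k) from
        Finset.sum_congr rfl (fun i hi => by
          rw [Finset.mem_Ioc] at hi; rw [if_neg (by omega)])]
      refine Finset.sum_nbij' (fun i => i-k) (fun j => j+k) ?_ ?_ ?_ ?_ ?_
      · intro i hi; simp only [Finset.mem_Ioc] at hi ⊢; omega
      · intro j hj; simp only [Finset.mem_Ioc] at hj ⊢; omega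
      · intro i hi; simp only [Finset.mem_Ioc] at hi; omega
      · intro j hj; simp only [Finset.mem_Ioc] at hj; omega
      · intro i _; rfl
  -- lower bound for T
  have hgeom1 := geom_tail α k
  have hgeom2 := geom_tail α (n-1-k)
  have h637 := alpha_ge_637 hn
  have h193 := alpha_pow_le_193 hn
  have h1ma := one_sub_alpha_le hn
  have hs0 := sqrtn_pos hn
  have hak1 : α ^ k ≤ 1 := pow_le_one₀ hα0.le hα1.le
  have hak2 : α ^ (n-1-k) ≤ 1 := pow_le_one₀ hα0.le hα1.le
  have hka : α ^ k * α ^ (n-1-k) = α ^ (n-1) := by rw [← pow_add]; congr 1; omega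
  have hTbound : Real.sqrt n ≤ 2 * T := by
    have hma : 0 < 1 - α := by linarith
    have e1 : (1 - α) * T = α * (2 - α^k - α^(n-1-k)) := by
      rw [hTval, mul_add, hgeom1, hgeom2]; ring
    have e3 : 1 - α^(n-1) ≤ 2 - α^k - α^(n-1-k) := by
      nlinarith [mul_nonneg (sub_nonneg.2 hak1) (sub_nonneg.2 hak2)]
    have e5 : (1 - α) * Real.sqrt n ≤ 1 := by
      have := mul_le_mul_of_nonneg_right h1ma hs0.le
      rwa [one_div, inv_mul_cancel₀ (ne_of_gt hs0)] at this
    have e6 : (0.514:ℝ) ≤ α * (1 - α^(n-1)) := by nlinarith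
    have e7 : (1 - α) * Real.sqrt n ≤ (1 - α) * (2 * T) := by
      nlinarith [mul_le_mul_of_nonneg_left e3 hα0.le]
    exact le_of_mul_le_mul_left e7 hma
  refine le_trans hprodle (mul_le_mul_of_nonneg_right ?_ ?_)
  · apply Real.exp_le_exp.2
    rw [hsum]; linarith
  · exact Finset.prod_nonneg (fun i _ => by positivity)
lemma newman_core {n : ℕ} (hn : 5 ≤ n) {t : ℝ} (ht0 : 0 ≤ t) (ht1 : t ≤ 1) :
    0 < newmanPoly n t + newmanPoly n (-t) ∧
      |t - newmanApprox n t| ≤ 3 * Real.exp (-Real.sqrt n) := by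
  set α := newmanAlpha n with hαdef
  have hα0 : 0 < α := alpha_pos
  have hα1 : α < 1 := alpha_lt_one hn
  set qp := newmanPoly n t with hqpdef
  set qm := newmanPoly n (-t) with hqmdef
  have hqp : 0 < qp := Finset.prod_pos (fun i _ => by positivity)
  have hqmeval : qm = ∏ i ∈ Finset.Icc 1 (n-1), (-t + α ^ i) := rfl
  have habs : |qm| = ∏ i ∈ Finset.Icc 1 (n-1), |t - α ^ i| := by
    rw [hqmeval, Finset.abs_prod]
    exact Finset.prod_congr rfl (fun i _ => by
      rw [show -t + α ^ i = -(t - α ^ i) by ring, abs_neg])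
  have hmem : n - 1 ∈ Finset.Icc 1 (n-1) := by
    rw [Finset.mem_Icc]; omega
  by_cases hcase : t ≤ α ^ (n-1)
  · -- small t
    have hqm0 : 0 ≤ qm := by
      rw [hqmeval]
      refine Finset.prod_nonneg (fun i hi => ?_)
      rw [Finset.mem_Icc] at hi
      have : α ^ (n-1) ≤ α ^ i := pow_le_pow_of_le_one hα0.le hα1.le hi.2
      linarith
    have hD : 0 < qp + qm := by linarith
    refine ⟨hD, ?_⟩
    have herr : t - newmanApprox n t = 2*t*qm/(qp+qm) := by
      rw [newmanApprox, ← hqpdef, ← hqmdef]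
      field_simp
      ring
    rw [herr, abs_of_nonneg (by positivity)]
    -- split off the factor i = n-1
    set qp' := ∏ i ∈ (Finset.Icc 1 (n-1)).erase (n-1), (t + α ^ i) with hqp'def
    set qm' := ∏ i ∈ (Finset.Icc 1 (n-1)).erase (n-1), (-t + α ^ i) with hqm'def
    have hqpsplit : qp = (t + α ^ (n-1)) * qp' := (Finset.mul_prod_erase _ _ hmem).symm
    have hqmsplit : qm = (-t + α ^ (n-1)) * qm' := by
      rw [hqmeval]; exact (Finset.mul_prod_erase _ _ hmem).symm
    have hqp' : 0 < qp' := Finset.prod_pos (fun i _ => by positivity)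
    have hqm'le : qm' ≤ qp' := by
      refine Finset.prod_le_prod (fun i hi => ?_) (fun i hi => by linarith)
      have hi' := Finset.mem_of_mem_erase hi
      rw [Finset.mem_Icc] at hi'
      have : α ^ (n-1) ≤ α ^ i := pow_le_pow_of_le_one hα0.le hα1.le hi'.2
      linarith
    have hbound : 2*t*qm/(qp+qm) ≤ α ^ (n-1) / 2 := by
      have hstep1 : 2*t*qm/(qp+qm) ≤ 2*t*qm/qp :=
        div_le_div_of_nonneg_left (by positivity) hqp (by linarith)
      have h1 : qm ≤ (-t + α ^ (n-1)) * qp' := by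
        rw [hqmsplit]
        exact mul_le_mul_of_nonneg_left hqm'le (by linarith)
      have hinner : 2*t*(-t + α ^ (n-1)) ≤ (α ^ (n-1)/2) * (t + α ^ (n-1)) := by
        nlinarith [sq_nonneg (α ^ (n-1) - 2*t)]
      have h2 : 2*t*qm ≤ (α ^ (n-1)/2) * qp := by
        rw [hqpsplit]
        nlinarith [mul_le_mul_of_nonneg_right hinner hqp'.le,
          mul_le_mul_of_nonneg_left h1 (by linarith : (0:ℝ) ≤ 2*t)]
      have hstep2 : 2*t*qm/qp ≤ α ^ (n-1) / 2 := by
        rw [div_le_iff₀ hqp]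
        linarith
      linarith
    -- α^(n-1) ≤ 1.5686 * exp(-√n)
    have hs := sqrt_ge_of_five hn
    have hs0 := sqrtn_pos hn
    have hpw : α ^ (n-1) ≤ 1.5686 * Real.exp (-Real.sqrt n) := by
      rw [alpha_pow_eq hn, show 1 / Real.sqrt n - Real.sqrt n
          = 1 / Real.sqrt n + (- Real.sqrt n) by ring, Real.exp_add]
      have h920 : (1:ℝ) / Real.sqrt n ≤ 9/20 := by
        rw [div_le_iff₀ hs0]; nlinarith
      have := Real.exp_le_exp.2 h920
      nlinarith [Real.exp_pos (-Real.sqrt n), exp_nine_twenty, this]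
    nlinarith [Real.exp_pos (-Real.sqrt n)]
  · -- large t
    push_neg at hcase
    set ε := Real.exp (-Real.sqrt n) with hεdef
    have hε0 : 0 < ε := Real.exp_pos _
    have hε1 : ε < 1 := exp_neg_sqrt_lt_one hn
    have hε3 : ε ≤ 1/3 := exp_neg_sqrt_le_third hn
    have key : |qm| ≤ ε * qp := by
      rw [habs]
      exact newman_prod_bound hn hcase.le ht1
    have hD : 0 < qp + qm := by
      nlinarith [neg_abs_le qm]
    refine ⟨hD, ?_⟩
    have herr : t - newmanApprox n t = 2*t*qm/(qp+qm) := by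
      rw [newmanApprox, ← hqpdef, ← hqmdef]
      field_simp
      ring
    rw [herr, abs_div, abs_of_pos hD, abs_mul, abs_mul, abs_of_nonneg ht0,
      show |(2:ℝ)| = 2 by norm_num]
    have h5 : 2*t*|qm| ≤ 2*ε*qp := by nlinarith [abs_nonneg qm]
    have h6 : (1-ε)*qp ≤ qp + qm := by nlinarith [neg_abs_le qm]
    have h7 : 2*t*|qm|/(qp+qm) ≤ (2*ε*qp)/((1-ε)*qp) :=
      div_le_div₀ (by positivity) h5 (by nlinarith) h6
    have h8 : (2*ε*qp)/((1-ε)*qp) = 2*ε/(1-ε) :=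
      mul_div_mul_right _ _ (ne_of_gt hqp)
    have h9 : 2*ε/(1-ε) ≤ 3*ε := by
      rw [div_le_iff₀ (by linarith : (0:ℝ) < 1-ε)]
      nlinarith
    calc 2*t*|qm|/(qp+qm) ≤ 2*ε/(1-ε) := by rw [← h8]; exact h7
      _ ≤ 3*ε := h9

/-- Theorem 1: rational approximation of `f₁(x) = a·x + b·|x|` on `[-c, c]`
at rate `3·b·c·exp(-√n)`, with numerator and denominator of degree at most `n + 1`. -/
theorem rational_approx_f1 (n : ℕ) (hn : 5 ≤ n) (a b c : ℝ) (hb : 1 ≤ b) (hc : 1 ≤ c) :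
    ∃ P Q : Polynomial ℝ, P.degree ≤ (n : ℕ) + 1 ∧ Q.degree ≤ (n : ℕ) + 1 ∧
      (∀ x ∈ Set.Icc (-c) c, Q.eval x ≠ 0) ∧
      ∀ x ∈ Set.Icc (-c) c,
        |(a * x + b * |x|) - P.eval x / Q.eval x| ≤ 3 * b * c * Real.exp (-Real.sqrt n) := by
  have hc0 : (0:ℝ) < c := by linarith
  have hb0 : (0:ℝ) < b := by linarith
  set α := newmanAlpha n with hαdef
  have hα0 : 0 < α := alpha_pos
  set m := n - 1 with hm
  set pp : Polynomial ℝ := ∏ i ∈ Finset.Icc 1 m, (Polynomial.X + Polynomial.C (c * α ^ i))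
    with hpp
  set pm : Polynomial ℝ := ∏ i ∈ Finset.Icc 1 m, (Polynomial.C (c * α ^ i) - Polynomial.X)
    with hpm
  set Q : Polynomial ℝ := pp + pm with hQ
  set P : Polynomial ℝ := Polynomial.C a * (Polynomial.X * Q)
    + Polynomial.C b * (Polynomial.X * (pp - pm)) with hP
  -- natDegree computations
  have hppnd : pp.natDegree ≤ m := by
    refine le_trans (Polynomial.natDegree_prod_le _ _) ?_
    have : ∀ i ∈ Finset.Icc 1 m, (Polynomial.X + Polynomial.C (c * α ^ i) : Polynomial ℝ).natDegree = 1 :=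
      fun i _ => Polynomial.natDegree_X_add_C _
    rw [Finset.sum_congr rfl this, Finset.sum_const, Nat.card_Icc, smul_eq_mul]
    omega
  have hpmnd : pm.natDegree ≤ m := by
    refine le_trans (Polynomial.natDegree_prod_le _ _) ?_
    have : ∀ i ∈ Finset.Icc 1 m, (Polynomial.C (c * α ^ i) - Polynomial.X : Polynomial ℝ).natDegree = 1 := by
      intro i _
      rw [show (Polynomial.C (c * α ^ i) - Polynomial.X : Polynomial ℝ)
          = -(Polynomial.X - Polynomial.C (c * α ^ i)) by ring, Polynomial.natDegree_neg,
        Polynomial.natDegree_X_sub_C]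
    rw [Finset.sum_congr rfl this, Finset.sum_const, Nat.card_Icc, smul_eq_mul]
    omega
  have hQnd : Q.natDegree ≤ m :=
    le_trans (Polynomial.natDegree_add_le _ _) (by omega)
  have hQdeg : Q.degree ≤ (n : ℕ) + 1 := by
    have h := Polynomial.natDegree_le_iff_degree_le.mp (show Q.natDegree ≤ n + 1 by omega)
    exact_mod_cast h
  have hPdeg : P.degree ≤ (n : ℕ) + 1 := by
    have h1 : P.natDegree ≤ n + 1 := by
      refine le_trans (Polynomial.natDegree_add_le _ _) ?_
      have h2 : (Polynomial.C a * (Polynomial.X * Q)).natDegree ≤ n + 1 := by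
        refine le_trans (Polynomial.natDegree_mul_le) ?_
        have := Polynomial.natDegree_mul_le (p := (Polynomial.X : Polynomial ℝ)) (q := Q)
        simp only [Polynomial.natDegree_C, Polynomial.natDegree_X] at *
        omega
      have h3 : (Polynomial.C b * (Polynomial.X * (pp - pm))).natDegree ≤ n + 1 := by
        refine le_trans (Polynomial.natDegree_mul_le) ?_
        have h4 := Polynomial.natDegree_mul_le (p := (Polynomial.X : Polynomial ℝ)) (q := pp - pm)
        have h5 := Polynomial.natDegree_sub_le pp pm
        simp only [Polynomial.natDegree_C, Polynomial.natDegree_X] at *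
        omega
      omega
    have h := Polynomial.natDegree_le_iff_degree_le.mp h1
    exact_mod_cast h
  have hmain : ∀ x ∈ Set.Icc (-c) c, Q.eval x ≠ 0 ∧
      |(a * x + b * |x|) - P.eval x / Q.eval x| ≤ 3 * b * c * Real.exp (-Real.sqrt n) := by
    intro x hx
    rw [Set.mem_Icc] at hx
    set t := x / c with htdef
    have hxc : x = c * t := by rw [htdef]; field_simp
    have ht1 : t ≤ 1 := by rw [htdef, div_le_one hc0]; exact hx.2
    have htm1 : -1 ≤ t := by rw [htdef, le_div_iff₀ hc0]; linarith [hx.1]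
    have hppe : pp.eval x = c ^ m * newmanPoly n t := by
      have e1 : pp.eval x = ∏ i ∈ Finset.Icc 1 m, (x + c * α ^ i) := by
        rw [hpp, Polynomial.eval_prod]
        exact Finset.prod_congr rfl (fun i _ => by simp)
      rw [e1, Finset.prod_congr rfl (fun i _ => show x + c * α ^ i = c * (t + α ^ i) by
        rw [hxc]; ring), Finset.prod_mul_distrib, Finset.prod_const, Nat.card_Icc]
      rw [show m + 1 - 1 = m by omega]
      simp only [newmanPoly]
      rfl
    have hpme : pm.eval x = c ^ m * newmanPoly n (-t) := by
      have e1 : pm.eval x = ∏ i ∈ Finset.Icc 1 m, (c * α ^ i - x) := by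
        rw [hpm, Polynomial.eval_prod]
        exact Finset.prod_congr rfl (fun i _ => by simp)
      rw [e1, Finset.prod_congr rfl (fun i _ => show c * α ^ i - x = c * (-t + α ^ i) by
        rw [hxc]; ring), Finset.prod_mul_distrib, Finset.prod_const, Nat.card_Icc]
      rw [show m + 1 - 1 = m by omega]
      simp only [newmanPoly]
      rfl
    set S := newmanPoly n t + newmanPoly n (-t) with hSdef
    set Df := newmanPoly n t - newmanPoly n (-t) with hDfdef
    have hS : 0 < S := by
      by_cases ht : 0 ≤ t
      · exact (newman_core hn ht ht1).1
      · push_neg at ht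
        have h := (newman_core hn (by linarith : (0:ℝ) ≤ -t) (by linarith)).1
        rw [neg_neg] at h
        rw [hSdef]
        linarith
    have hQe : Q.eval x = c ^ m * S := by
      rw [hQ, Polynomial.eval_add, hppe, hpme, hSdef]
      ring
    have hQne : Q.eval x ≠ 0 := by
      rw [hQe]
      positivity
    refine ⟨hQne, ?_⟩
    have hPe : P.eval x = a * x * Q.eval x + b * x * (c ^ m * Df) := by
      rw [hP]
      simp only [Polynomial.eval_add, Polynomial.eval_mul, Polynomial.eval_C,
        Polynomial.eval_X, Polynomial.eval_sub]
      rw [hppe, hpme, hDfdef]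
      ring
    have hratio : P.eval x / Q.eval x = a * x + b * (x * Df / S) := by
      rw [hPe, hQe]
      have hcm : (0:ℝ) < c ^ m := by positivity
      field_simp
    have hclaim : |(|t| - t * Df / S)| ≤ 3 * Real.exp (-Real.sqrt n) := by
      by_cases ht : 0 ≤ t
      · have h := (newman_core hn ht ht1).2
        rw [abs_of_nonneg ht]
        rw [newmanApprox] at h
        exact h
      · push_neg at ht
        have h := (newman_core hn (by linarith : (0:ℝ) ≤ -t) (by linarith)).2
        rw [newmanApprox, neg_neg] at h
        have e : |t| - t * Df / S = -t - -t * (newmanPoly n (-t) - newmanPoly n t)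
            / (newmanPoly n (-t) + newmanPoly n t) := by
          rw [abs_of_neg ht, hDfdef, hSdef]
          rw [show newmanPoly n (-t) + newmanPoly n t
            = newmanPoly n t + newmanPoly n (-t) by ring]
          ring
        rw [e]
        exact h
    have herr : (a * x + b * |x|) - P.eval x / Q.eval x = b * (c * (|t| - t * Df / S)) := by
      rw [hratio, hxc, abs_mul, abs_of_pos hc0]
      ring
    rw [herr, abs_mul, abs_mul, abs_of_pos hb0, abs_of_pos hc0]
    calc b * (c * |(|t| - t * Df / S)|) ≤ b * (c * (3 * Real.exp (-Real.sqrt n))) := by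
          apply mul_le_mul_of_nonneg_left _ hb0.le
          exact mul_le_mul_of_nonneg_left hclaim hc0.le
      _ = 3 * b * c * Real.exp (-Real.sqrt n) := by ring
  exact ⟨P, Q, hPdeg, hQdeg, fun x hx => (hmain x hx).1, fun x hx => (hmain x hx).2⟩
end

section
/- For every integer n ≥ 5 and every real x with exp(−√n) ≤ x ≤ 1, one has |N_n(−x)| ≤ exp(−√n) · N_n(x); equivalently, |N_n(x)/N_n(−x)| ≥ exp(√n) whenever N_n(−x) ≠ 0. -/
/- ### Auxiliary lemmas -/

lemma newman_F_deriv (y : ℝ) :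
    HasDerivAt (fun y : ℝ => (1 + y) * Real.exp (-y) - (1 - y) * Real.exp y)
      (y * (Real.exp y - Real.exp (-y))) y := by
  have h1 : HasDerivAt (fun y : ℝ => Real.exp (-y)) (Real.exp (-y) * (-1)) y := by
    simpa using (((hasDerivAt_id y).neg).exp)
  have h2 : HasDerivAt (fun y : ℝ => (1 + y) * Real.exp (-y))
      (1 * Real.exp (-y) + (1 + y) * (Real.exp (-y) * (-1))) y :=
    (((hasDerivAt_id y).const_add 1)).mul h1
  have h3 : HasDerivAt (fun y : ℝ => (1 - y) * Real.exp y)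
      ((-1) * Real.exp y + (1 - y) * Real.exp y) y := by
    have : HasDerivAt (fun y : ℝ => 1 - y) (-1) y := by
      exact (hasDerivAt_id' (x := y)).const_sub 1
    exact this.mul (Real.hasDerivAt_exp y)
  refine (h2.sub h3).congr_deriv ?_
  ring

lemma newman_key (r : ℝ) (hr : 0 ≤ r) :
    (1 - r) * Real.exp r ≤ (1 + r) * Real.exp (-r) := by
  set F : ℝ → ℝ := fun y => (1 + y) * Real.exp (-y) - (1 - y) * Real.exp y with hF
  have hmono : MonotoneOn F (Set.Ici (0:ℝ)) := by
    apply monotoneOn_of_deriv_nonneg (convex_Ici 0)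
    · exact fun y _ => ((newman_F_deriv y).continuousAt).continuousWithinAt
    · exact fun y _ => ((newman_F_deriv y).differentiableAt).differentiableWithinAt
    · intro y hy
      rw [interior_Ici] at hy
      rw [(newman_F_deriv y).deriv]
      have : Real.exp (-y) ≤ Real.exp y := Real.exp_le_exp.2 (by linarith [le_of_lt (Set.mem_Ioi.1 hy)])
      have hy0 : (0:ℝ) ≤ y := le_of_lt (Set.mem_Ioi.1 hy)
      nlinarith
  have h0 : F 0 ≤ F r := hmono (Set.self_mem_Ici) (Set.mem_Ici.2 hr) hr
  have : F 0 = 0 := by simp [hF]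
  rw [this] at h0
  simp only [hF] at h0
  linarith

lemma newman_factor {a b c : ℝ} (ha : 0 < a) (hb : 0 < b) (hc : 0 ≤ c)
    (h1 : c * b ≤ a) (h2 : c * a ≤ b) :
    |a - b| ≤ Real.exp (-(2 * c)) * (a + b) := by
  have hk := newman_key c hc
  have hec : (0:ℝ) < Real.exp c := Real.exp_pos _
  have hE : (0:ℝ) < Real.exp (-(2 * c)) := Real.exp_pos _
  have h3 : (1 - c) ≤ (1 + c) * Real.exp (-(2 * c)) := by
    have hmul : Real.exp (-c) * Real.exp (-c) = Real.exp (-(2 * c)) := by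
      rw [← Real.exp_add]; ring_nf
    have h4 : (1 - c) * Real.exp c * Real.exp (-c) ≤ (1 + c) * Real.exp (-c) * Real.exp (-c) :=
      mul_le_mul_of_nonneg_right hk (Real.exp_pos _).le
    have hcc : Real.exp c * Real.exp (-c) = 1 := by rw [← Real.exp_add]; simp
    calc (1 - c) = (1 - c) * (Real.exp c * Real.exp (-c)) := by rw [hcc]; ring
      _ = (1 - c) * Real.exp c * Real.exp (-c) := by ring
      _ ≤ (1 + c) * Real.exp (-c) * Real.exp (-c) := h4
      _ = (1 + c) * (Real.exp (-c) * Real.exp (-c)) := by ring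
      _ = (1 + c) * Real.exp (-(2 * c)) := by rw [hmul]
  have h1c : (0:ℝ) < 1 + c := by linarith
  rw [abs_sub_le_iff]
  constructor
  · nlinarith
  · nlinarith

lemma newman_exp1 : (0.63 : ℝ) ≤ Real.exp (-(9/20)) := by
  have h := Real.exp_bound (x := -(9/20 : ℝ)) (by rw [abs_of_nonpos (by norm_num)]; norm_num)
    (n := 4) (by norm_num)
  rw [abs_le] at h
  have hs : ∑ m ∈ Finset.range 4, (-(9/20 : ℝ)) ^ m / m.factorial
      = 1 - 9/20 + (81/400)/2 - (729/8000)/6 := by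
    simp [Finset.sum_range_succ, Nat.factorial]
    norm_num
  rw [hs] at h
  rw [abs_of_nonpos (by norm_num)] at h
  have : ((4:ℕ).succ : ℝ) = 5 := by norm_num
  rw [this] at h
  have hf : ((4:ℕ).factorial : ℝ) = 24 := by norm_num [Nat.factorial]
  rw [hf] at h
  norm_num at h ⊢
  linarith

lemma newman_exp2 : Real.exp (-(16/9)) ≤ (0.18 : ℝ) := by
  have h := Real.exp_bound (x := -(8/9 : ℝ)) (by rw [abs_of_nonpos (by norm_num)]; norm_num)
    (n := 5) (by norm_num)
  rw [abs_le] at h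
  have hs : ∑ m ∈ Finset.range 5, (-(8/9 : ℝ)) ^ m / m.factorial
      = 1 - 8/9 + (64/81)/2 - (512/729)/6 + (4096/6561)/24 := by
    simp [Finset.sum_range_succ, Nat.factorial]
    norm_num
  rw [hs] at h
  rw [abs_of_nonpos (by norm_num)] at h
  have : ((5:ℕ).succ : ℝ) = 6 := by norm_num
  rw [this] at h
  have hf : ((5:ℕ).factorial : ℝ) = 120 := by norm_num [Nat.factorial]
  rw [hf] at h
  have hub : Real.exp (-(8/9 : ℝ)) ≤ 0.4207 := by norm_num at h ⊢; linarith
  have heq : Real.exp (-(16/9 : ℝ)) = Real.exp (-(8/9)) * Real.exp (-(8/9)) := by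
    rw [← Real.exp_add]; norm_num
  rw [heq]
  have hpos : (0:ℝ) ≤ Real.exp (-(8/9 : ℝ)) := (Real.exp_pos _).le
  nlinarith

lemma newman_reindex1 (α : ℝ) (k : ℕ) :
    ∑ i ∈ Finset.Icc 1 k, α ^ (k + 1 - i) = ∑ j ∈ Finset.range k, α ^ (j + 1) := by
  have h1 : Finset.Icc 1 k = Finset.Ico 1 (k + 1) := by rw [Finset.Ico_add_one_right_eq_Icc]
  rw [h1, Finset.sum_Ico_eq_sum_range]
  simp only [Nat.add_sub_cancel]
  have := Finset.sum_range_reflect (fun j => α ^ (j + 1)) k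
  rw [← this]
  apply Finset.sum_congr rfl
  intro j hj
  rw [Finset.mem_range] at hj
  congr 1
  omega

lemma newman_reindex2 (α : ℝ) (k m : ℕ) (hk : k ≤ m) :
    ∑ i ∈ Finset.Icc (k + 1) m, α ^ (i - k) = ∑ j ∈ Finset.range (m - k), α ^ (j + 1) := by
  have h1 : Finset.Icc (k + 1) m = Finset.Ico (k + 1) (m + 1) := by rw [Finset.Ico_add_one_right_eq_Icc]
  rw [h1, Finset.sum_Ico_eq_sum_range]
  have h2 : m + 1 - (k + 1) = m - k := by omega
  rw [h2]
  apply Finset.sum_congr rfl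
  intro j hj
  congr 1
  omega

lemma newman_two_sided (α : ℝ) (h0 : 0 ≤ α) (h1 : α ≤ 1) (k m : ℕ) (hk : k ≤ m) :
    ∑ j ∈ Finset.range m, α ^ (j + 1) ≤
      ∑ j ∈ Finset.range k, α ^ (j + 1) + ∑ j ∈ Finset.range (m - k), α ^ (j + 1) := by
  have hsplit : ∑ j ∈ Finset.range m, α ^ (j + 1)
      = ∑ j ∈ Finset.range (m - k), α ^ (j + 1) + ∑ j ∈ Finset.Ico (m - k) m, α ^ (j + 1) := by
    rw [Finset.range_eq_Ico, ← Finset.sum_Ico_consecutive _ (Nat.zero_le (m - k)) (Nat.sub_le m k), ← Finset.range_eq_Ico]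
  rw [hsplit]
  have h3 : ∑ j ∈ Finset.Ico (m - k) m, α ^ (j + 1) ≤ ∑ j ∈ Finset.range k, α ^ (j + 1) := by
    rw [Finset.sum_Ico_eq_sum_range]
    have h4 : m - (m - k) = k := by omega
    rw [h4]
    apply Finset.sum_le_sum
    intro j hj
    exact pow_le_pow_of_le_one h0 h1 (by omega)
  linarith

lemma newman_sum_lower (n : ℕ) (hn : 5 ≤ n) :
    Real.sqrt n ≤ 2 * ∑ j ∈ Finset.range (n - 1), (newmanAlpha n) ^ (j + 1) := by
  have hn0 : (0:ℝ) < n := by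
    have : (5:ℝ) ≤ n := by exact_mod_cast hn
    linarith
  set s := Real.sqrt n with hs
  have hs0 : 0 < s := Real.sqrt_pos.2 hn0
  have hs2 : s ^ 2 = n := Real.sq_sqrt hn0.le
  have hs5 : (2.236 : ℝ) ≤ s := by
    rw [hs, Real.le_sqrt (by norm_num) hn0.le]
    have : (5:ℝ) ≤ n := by exact_mod_cast hn
    nlinarith
  set α := newmanAlpha n with hα
  have hαdef : α = Real.exp (-1 / s) := rfl
  have hα0 : 0 < α := Real.exp_pos _
  have hα1 : α < 1 := by
    rw [hαdef, Real.exp_lt_one_iff]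
    exact div_neg_of_neg_of_pos (by norm_num) hs0
  have hαL : (0.63 : ℝ) ≤ α := by
    refine le_trans newman_exp1 ?_
    rw [hαdef]
    apply Real.exp_le_exp.2
    rw [neg_div, neg_le_neg_iff, div_le_iff₀ hs0]
    linarith
  have hcast : ((n - 1 : ℕ) : ℝ) = (n : ℝ) - 1 := by
    have h1 : 1 ≤ n := by omega
    push_cast [Nat.cast_sub h1]
    ring
  have hαm : α ^ (n - 1) = Real.exp (((n - 1 : ℕ) : ℝ) * (-1 / s)) := by
    rw [Real.exp_nat_mul, hαdef]
  have hαmU : α ^ (n - 1) ≤ (0.18 : ℝ) := by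
    refine le_trans ?_ newman_exp2
    rw [hαm]
    apply Real.exp_le_exp.2
    rw [hcast]
    have h1 : (16/9 : ℝ) ≤ ((n:ℝ) - 1) / s := by
      rw [le_div_iff₀ hs0]
      nlinarith [sq_nonneg (s - 2.236)]
    have h2 : ((n:ℝ) - 1) * (-1 / s) = -(((n:ℝ) - 1) / s) := by ring
    rw [h2]
    linarith
  set S := ∑ j ∈ Finset.range (n - 1), α ^ j with hS
  have hgeom : S * (α - 1) = α ^ (n - 1) - 1 := geom_sum_mul α (n - 1)
  have hT : ∑ j ∈ Finset.range (n - 1), α ^ (j + 1) = α * S := by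
    rw [hS, Finset.mul_sum]
    apply Finset.sum_congr rfl
    intro j _
    rw [pow_succ]
    ring
  rw [hT]
  have h1mα : (0 : ℝ) < 1 - α := by linarith
  have key1 : s * (1 - α) ≤ 1 := by
    have h3 : -1 / s + 1 ≤ α := by rw [hαdef]; exact Real.add_one_le_exp _
    have h4 : 1 - α ≤ 1 / s := by
      have : -1 / s = -(1 / s) := by ring
      rw [this] at h3
      linarith
    calc s * (1 - α) ≤ s * (1 / s) := mul_le_mul_of_nonneg_left h4 hs0.le
      _ = 1 := by field_simp
  have key2 : (1 : ℝ) ≤ 2 * (α * S) * (1 - α) := by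
    have e0 : S * (1 - α) = 1 - α ^ (n - 1) := by nlinarith [hgeom]
    have e1 : (0.82 : ℝ) ≤ 1 - α ^ (n - 1) := by linarith
    have e2 : (0.63 : ℝ) * 0.82 ≤ α * (1 - α ^ (n - 1)) :=
      mul_le_mul hαL e1 (by norm_num) hα0.le
    nlinarith [e2, e0]
  have hchain := le_trans key1 key2
  have h5 : s * (1 - α) ≤ (2 * (α * S)) * (1 - α) := by nlinarith [hchain]
  exact le_of_mul_le_mul_right h5 h1mα

/-- Newman's inequality (Lemma 3.2, Ch. 7 of Lorentz). -/
theorem newman_inequality (n : ℕ) (hn : 5 ≤ n) (x : ℝ)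
    (hx1 : Real.exp (-Real.sqrt n) ≤ x) (hx2 : x ≤ 1) :
    |newmanPoly n (-x)| ≤ Real.exp (-Real.sqrt n) * newmanPoly n x ∧
      (newmanPoly n (-x) ≠ 0 →
        Real.exp (Real.sqrt n) ≤ |newmanPoly n x / newmanPoly n (-x)|) := by
  classical
  have hn0 : (0:ℝ) < n := by
    have : (5:ℝ) ≤ n := by exact_mod_cast hn
    linarith
  have hs0 : 0 < Real.sqrt n := Real.sqrt_pos.2 hn0
  set α := newmanAlpha n with hα
  have hα0 : 0 < α := Real.exp_pos _
  have hα1 : α < 1 := by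
    rw [hα, newmanAlpha, Real.exp_lt_one_iff]
    exact div_neg_of_neg_of_pos (by norm_num) hs0
  have hαn : α ^ n = Real.exp (-Real.sqrt n) := by
    rw [hα, newmanAlpha, ← Real.exp_nat_mul]
    congr 1
    have h1 : (n:ℝ) * (-1 / Real.sqrt n) = -((n:ℝ) / Real.sqrt n) := by ring
    rw [h1, Real.div_sqrt]
  have hx0 : 0 < x := lt_of_lt_of_le (Real.exp_pos _) hx1
  -- locate x between consecutive powers of α
  obtain ⟨k, hk1n, hxk, hkx⟩ : ∃ k, k + 1 ≤ n ∧ x ≤ α ^ k ∧ α ^ (k + 1) ≤ x := by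
    by_cases hfull : Nat.findGreatest (fun j => x ≤ α ^ j) n = n
    · refine ⟨n - 1, by omega, ?_, ?_⟩
      · have hPn : x ≤ α ^ n := by
          have := Nat.findGreatest_spec (P := fun j => x ≤ α ^ j) (Nat.zero_le n)
            (by simpa using hx2)
          rwa [hfull] at this
        exact le_trans hPn (pow_le_pow_of_le_one hα0.le hα1.le (by omega))
      · have h2 : n - 1 + 1 = n := by omega
        rw [h2, hαn]; exact hx1
    · have hkn : Nat.findGreatest (fun j => x ≤ α ^ j) n < n :=
        lt_of_le_of_ne (Nat.findGreatest_le n) hfull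
      have hPk : x ≤ α ^ Nat.findGreatest (fun j => x ≤ α ^ j) n :=
        Nat.findGreatest_spec (P := fun j => x ≤ α ^ j) (Nat.zero_le n) (by simpa using hx2)
      have hnot : ¬ x ≤ α ^ (Nat.findGreatest (fun j => x ≤ α ^ j) n + 1) :=
        Nat.findGreatest_is_greatest (P := fun j => x ≤ α ^ j) (n := n)
          (Nat.lt_succ_self _) (by omega)
      exact ⟨_, by omega, hPk, (not_le.1 hnot).le⟩
  have hkm : k ≤ n - 1 := by omega
  -- per-factor bound
  have hfac : ∀ i ∈ Finset.Icc 1 (n - 1),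
      |(-x) + α ^ i| ≤
        Real.exp (-(2 * α ^ (if i ≤ k then k + 1 - i else i - k))) * (x + α ^ i) := by
    intro i hi
    rw [Finset.mem_Icc] at hi
    have hbi : 0 < α ^ i := pow_pos hα0 i
    have habs : (-x) + α ^ i = -(x - α ^ i) := by ring
    rw [habs, abs_neg]
    by_cases hik : i ≤ k
    · rw [if_pos hik]
      apply newman_factor hx0 hbi (pow_nonneg hα0.le _)
      · rw [← pow_add]
        have h2 : k + 1 - i + i = k + 1 := by omega
        rw [h2]; exact hkx
      · calc α ^ (k + 1 - i) * x ≤ α ^ (k + 1 - i) * α ^ k :=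
            mul_le_mul_of_nonneg_left hxk (pow_nonneg hα0.le _)
          _ = α ^ (k + 1 - i + k) := by rw [pow_add]
          _ ≤ α ^ i := pow_le_pow_of_le_one hα0.le hα1.le (by omega)
    · rw [if_neg hik]
      apply newman_factor hx0 hbi (pow_nonneg hα0.le _)
      · rw [← pow_add]
        exact le_trans (pow_le_pow_of_le_one hα0.le hα1.le (show k + 1 ≤ i - k + i by omega)) hkx
      · calc α ^ (i - k) * x ≤ α ^ (i - k) * α ^ k :=
            mul_le_mul_of_nonneg_left hxk (pow_nonneg hα0.le _)
          _ = α ^ (i - k + k) := by rw [pow_add]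
          _ = α ^ i := by congr 1; omega
  -- polynomial values
  have hNx : newmanPoly n x = ∏ i ∈ Finset.Icc 1 (n - 1), (x + α ^ i) := by
    rw [newmanPoly, hα]
  have hNpos : 0 < newmanPoly n x := by
    rw [hNx]
    exact Finset.prod_pos fun i _ => by positivity
  have habsN : |newmanPoly n (-x)| = ∏ i ∈ Finset.Icc 1 (n - 1), |(-x) + α ^ i| := by
    rw [newmanPoly, hα, Finset.abs_prod]
  -- product bound
  have hstep : |newmanPoly n (-x)| ≤
      (∏ i ∈ Finset.Icc 1 (n - 1),
        Real.exp (-(2 * α ^ (if i ≤ k then k + 1 - i else i - k)))) *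
      ∏ i ∈ Finset.Icc 1 (n - 1), (x + α ^ i) := by
    rw [habsN, ← Finset.prod_mul_distrib]
    exact Finset.prod_le_prod (fun i _ => abs_nonneg _) hfac
  have hprodexp : ∏ i ∈ Finset.Icc 1 (n - 1),
      Real.exp (-(2 * α ^ (if i ≤ k then k + 1 - i else i - k)))
      = Real.exp (-(2 * ∑ i ∈ Finset.Icc 1 (n - 1),
          α ^ (if i ≤ k then k + 1 - i else i - k))) := by
    rw [← Real.exp_sum]
    congr 1
    rw [Finset.mul_sum, ← Finset.sum_neg_distrib]
  -- sum bound
  have hsum : Real.sqrt n ≤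
      2 * ∑ i ∈ Finset.Icc 1 (n - 1), α ^ (if i ≤ k then k + 1 - i else i - k) := by
    have hsplit : ∑ i ∈ Finset.Icc 1 (n - 1), α ^ (if i ≤ k then k + 1 - i else i - k)
        = ∑ i ∈ Finset.Icc 1 k, α ^ (k + 1 - i)
          + ∑ i ∈ Finset.Icc (k + 1) (n - 1), α ^ (i - k) := by
      rw [show Finset.Icc 1 (n-1) = Finset.Ioc 0 (n-1) from Finset.Icc_add_one_left_eq_Ioc 0 (n-1),
        show Finset.Icc 1 k = Finset.Ioc 0 k from Finset.Icc_add_one_left_eq_Ioc 0 k,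
        show Finset.Icc (k+1) (n-1) = Finset.Ioc k (n-1) from Finset.Icc_add_one_left_eq_Ioc k (n-1),
        ← Finset.sum_Ioc_consecutive _ (Nat.zero_le k) hkm]
      congr 1
      · apply Finset.sum_congr rfl
        intro i hi
        rw [Finset.mem_Ioc] at hi
        rw [if_pos hi.2]
      · apply Finset.sum_congr rfl
        intro i hi
        rw [Finset.mem_Ioc] at hi
        rw [if_neg (by omega)]
    rw [hsplit, newman_reindex1 α k, newman_reindex2 α k (n - 1) hkm]
    have h2s := newman_two_sided α hα0.le hα1.le k (n - 1) hkm
    have h3s := newman_sum_lower n hn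
    rw [← hα] at h3s
    linarith
  have hexple : Real.exp (-(2 * ∑ i ∈ Finset.Icc 1 (n - 1),
      α ^ (if i ≤ k then k + 1 - i else i - k))) ≤ Real.exp (-Real.sqrt n) :=
    Real.exp_le_exp.2 (by linarith)
  have part1 : |newmanPoly n (-x)| ≤ Real.exp (-Real.sqrt n) * newmanPoly n x := by
    calc |newmanPoly n (-x)|
        ≤ (∏ i ∈ Finset.Icc 1 (n - 1),
            Real.exp (-(2 * α ^ (if i ≤ k then k + 1 - i else i - k)))) *
          ∏ i ∈ Finset.Icc 1 (n - 1), (x + α ^ i) := hstep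
      _ = Real.exp (-(2 * ∑ i ∈ Finset.Icc 1 (n - 1),
            α ^ (if i ≤ k then k + 1 - i else i - k))) * newmanPoly n x := by
          rw [hprodexp, hNx]
      _ ≤ Real.exp (-Real.sqrt n) * newmanPoly n x :=
          mul_le_mul_of_nonneg_right hexple hNpos.le
  refine ⟨part1, fun hne => ?_⟩
  have habs0 : 0 < |newmanPoly n (-x)| := abs_pos.2 hne
  rw [abs_div, le_div_iff₀ habs0, abs_of_pos hNpos]
  have hmul := mul_le_mul_of_nonneg_left part1 (Real.exp_pos (Real.sqrt n)).le
  have hee : Real.exp (Real.sqrt n) * Real.exp (-Real.sqrt n) = 1 := by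
    rw [← Real.exp_add]; simp
  nlinarith [hmul, hee, hNpos]
end

section
/- For every integer n ≥ 5 and every real x with exp(−√n) < x ≤ 1, one has |x − A_n(x)| ≤ 3·exp(−√n). -/
open Finset Real


lemma exp_neg_ge_poly (w : ℝ) (h0 : 0 ≤ w) (h1 : w ≤ 1) :
    1 - w + w^2/2 - w^3/6 + w^4/24 - w^5/100 ≤ Real.exp (-w) := by
  have hb := Real.exp_bound (x := -w) (by rw [abs_neg, abs_of_nonneg h0]; exact h1) (n := 5) (by norm_num)
  rw [abs_neg, abs_of_nonneg h0] at hb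
  have hs : ∑ m ∈ range 5, (-w) ^ m / (m.factorial : ℝ)
      = 1 - w + w^2/2 - w^3/6 + w^4/24 := by
    simp [Finset.sum_range_succ, Nat.factorial]
    ring
  rw [hs] at hb
  have key := (abs_le.1 hb).1
  norm_num [Nat.factorial] at key
  linarith

lemma pade_bound (w : ℝ) (h0 : 0 ≤ w) (h1 : w ≤ 1) :
    (2 - w) / (2 + w) ≤ Real.exp (-w) := by
  have h := exp_neg_ge_poly w h0 h1
  have h2 : (0:ℝ) < 2 + w := by linarith
  rw [div_le_iff₀ h2]
  nlinarith [pow_nonneg h0 3, pow_nonneg h0 4, pow_nonneg h0 5, pow_nonneg h0 6,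
    mul_le_mul_of_nonneg_left h h2.le]

lemma key_pade (u : ℝ) (h0 : 0 ≤ u) (h1 : u ≤ 1) :
    1 - u ≤ (1 + u) * Real.exp (-(2*u)) := by
  have hp := pade_bound u h0 h1
  have hq : (2 - u)/(2 + u) ≥ 0 := div_nonneg (by linarith) (by linarith)
  have hsq : ((2-u)/(2+u))^2 ≤ Real.exp (-u) * Real.exp (-u) := by
    nlinarith [Real.exp_nonneg (-u)]
  have he : Real.exp (-(2*u)) = Real.exp (-u) * Real.exp (-u) := by
    rw [← Real.exp_add]; ring_nf
  rw [he]
  have halg : 1 - u ≤ (1 + u) * ((2-u)/(2+u))^2 := by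
    have h2 : (0:ℝ) < 2 + u := by linarith
    rw [div_pow, ← mul_div_assoc, le_div_iff₀ (by positivity)]
    nlinarith [pow_nonneg h0 3]
  calc 1 - u ≤ (1 + u) * ((2-u)/(2+u))^2 := halg
  _ ≤ (1 + u) * (Real.exp (-u) * Real.exp (-u)) := by
      apply mul_le_mul_of_nonneg_left hsq (by linarith)



lemma sub_le_exp_ratio (y z : ℝ) (hy : 0 < y) (hyz : y ≤ z) :
    z - y ≤ (z + y) * Real.exp (-(2 * (y/z))) := by
  have hz : 0 < z := lt_of_lt_of_le hy hyz
  have h := key_pade (y/z) (by positivity) ((div_le_one hz).mpr hyz)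
  have h2 := mul_le_mul_of_nonneg_left h hz.le
  calc z - y = z * (1 - y/z) := by field_simp
  _ ≤ z * ((1 + y/z) * Real.exp (-(2*(y/z)))) := h2
  _ = (z + y) * Real.exp (-(2 * (y/z))) := by field_simp

lemma factor_bound (a x : ℝ) (ha : 0 < a) (hx : 0 < x) :
    |a - x| ≤ (a + x) * Real.exp (-(2 * min (x/a) (a/x))) := by
  rcases le_total x a with h | h
  · have hmin : min (x/a) (a/x) = x/a := by
      apply min_eq_left
      calc x/a ≤ 1 := (div_le_one ha).mpr h
      _ ≤ a/x := (one_le_div hx).mpr h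
    rw [hmin, abs_of_nonneg (by linarith)]
    exact sub_le_exp_ratio x a hx h
  · have hmin : min (x/a) (a/x) = a/x := by
      apply min_eq_right
      calc a/x ≤ 1 := (div_le_one hx).mpr h
      _ ≤ x/a := (one_le_div ha).mpr h
    rw [hmin, abs_of_nonpos (by linarith)]
    have := sub_le_exp_ratio a x ha h
    calc -(a - x) = x - a := by ring
    _ ≤ (x + a) * Real.exp (-(2*(a/x))) := this
    _ = (a + x) * Real.exp (-(2*(a/x))) := by ring

-- numeric lemma
lemma half_le_alpha_sub (n : ℕ) (hn : 5 ≤ n) :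
    (1:ℝ)/2 ≤ Real.exp (-1/Real.sqrt n) - Real.exp (-Real.sqrt n) := by
  have hn5 : (5:ℝ) ≤ (n:ℝ) := by exact_mod_cast hn
  have hs5 : (2.236:ℝ) ≤ Real.sqrt n := by
    rw [show (2.236:ℝ) = √(2.236^2) by rw [Real.sqrt_sq]; norm_num]
    apply Real.sqrt_le_sqrt; nlinarith
  have hs2 : (2:ℝ) ≤ Real.sqrt n := by linarith
  -- upper bound on exp(-√n)
  have hup : Real.exp (-Real.sqrt n) ≤ 0.1354 := by
    have h1 : Real.exp (-Real.sqrt n) ≤ Real.exp (-2) := by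
      apply Real.exp_le_exp.mpr; linarith
    have h2 : Real.exp (-2) ≤ 0.1354 := by
      rw [Real.exp_neg]
      have h7 : (7.389:ℝ) ≤ Real.exp 2 := by
        have := Real.exp_one_gt_d9
        have h3 : Real.exp 2 = Real.exp 1 * Real.exp 1 := by
          rw [← Real.exp_add]; norm_num
        nlinarith
      calc (Real.exp 2)⁻¹ ≤ (7.389:ℝ)⁻¹ := by
            apply inv_anti₀ (by norm_num) h7
      _ ≤ 0.1354 := by norm_num
    linarith
  -- lower bound on exp(-1/√n)
  have hlow : (0.637:ℝ) ≤ Real.exp (-1/Real.sqrt n) := by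
    have h1 : -1/Real.sqrt n ≥ -0.4473 := by
      rw [ge_iff_le, neg_div, neg_le_neg_iff]
      rw [div_le_iff₀ (by linarith)]
      nlinarith
    have h2 : Real.exp (-(0.4473:ℝ)) ≤ Real.exp (-1/Real.sqrt n) := by
      apply Real.exp_le_exp.mpr; linarith
    have h3 : (0.637:ℝ) ≤ Real.exp (-(0.4473:ℝ)) := by
      have he : Real.exp (-(0.4473:ℝ)) = Real.exp (-(0.4473/32)) ^ (32:ℕ) := by
        rw [← Real.exp_nat_mul]; norm_num
      have hb : (1 - 0.4473/32 : ℝ) ≤ Real.exp (-(0.4473/32)) := by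
        have := Real.add_one_le_exp (-(0.4473/32:ℝ)); linarith
      have hp : ((1 - 0.4473/32 : ℝ)) ^ (32:ℕ) ≤ Real.exp (-(0.4473/32)) ^ (32:ℕ) := by
        apply pow_le_pow_left₀ (by norm_num) hb
      have hnum : (0.637:ℝ) ≤ (1 - 0.4473/32 : ℝ) ^ (32:ℕ) := by norm_num
      rw [he]; linarith
    linarith
  linarith




lemma geom_sum_alpha (α : ℝ) (hα : α ≠ 1) (M : ℕ) :
    ∑ j ∈ range M, α ^ (j+1) = (α - α^(M+1)) / (1 - α) := by
  have h1 : 1 - α ≠ 0 := by intro h; apply hα; linarith [sub_eq_zero.mp h]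
  induction M with
  | zero => simp
  | succ M ih =>
    rw [Finset.sum_range_succ, ih]
    field_simp
    ring

lemma newman_core_s8 (n : ℕ) (hn : 5 ≤ n) (x : ℝ)
    (hx1 : Real.exp (-Real.sqrt n) < x) (hx2 : x ≤ 1) :
    |newmanPoly n (-x)| ≤ Real.exp (-Real.sqrt n) * newmanPoly n x := by
  classical
  set α := newmanAlpha n with hαdef
  have hn0 : (0:ℝ) < (n:ℝ) := by
    have : (5:ℝ) ≤ (n:ℝ) := by exact_mod_cast hn
    linarith
  have hsn : (0:ℝ) < Real.sqrt n := Real.sqrt_pos.mpr hn0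
  have hα0 : 0 < α := Real.exp_pos _
  have hα1 : α < 1 := by
    apply Real.exp_lt_one_iff.mpr
    rw [neg_div]
    simp only [Left.neg_neg_iff]
    positivity
  have hαne : α ≠ 1 := ne_of_lt hα1
  have hss : Real.sqrt n * Real.sqrt n = (n:ℝ) := Real.mul_self_sqrt hn0.le
  have hαn : α ^ n = Real.exp (-Real.sqrt n) := by
    rw [hαdef, newmanAlpha, ← Real.exp_nat_mul]
    congr 1
    field_simp
    rw [Real.sq_sqrt hn0.le]
  have hx0 : 0 < x := lt_trans (Real.exp_pos _) hx1
  have hxαn : α ^ n < x := by rw [hαn]; exact hx1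
  -- define m
  set P : ℕ → Prop := fun k => x ≤ α ^ k with hP
  set m := Nat.findGreatest P n with hm
  have hPm : x ≤ α ^ m := by
    have h0 : P 0 := by simpa [hP] using hx2
    exact Nat.findGreatest_spec (Nat.zero_le n) h0
  have hmn : m < n := by
    rcases lt_or_eq_of_le (Nat.findGreatest_le (P := P) n) with h | h
    · exact h
    · exfalso; rw [hm] at hPm; rw [h] at hPm; linarith
  have hPm1 : α ^ (m+1) < x := by
    have hng := Nat.findGreatest_is_greatest (P := P) (n := n) (k := m+1)
      (by omega) (by omega)
    rw [hP] at hng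
    exact lt_of_not_ge hng
  -- the weight function
  set u : ℕ → ℝ := fun i => min (x / α^i) (α^i / x) with hu
  -- sum lower bound
  have hsum : Real.sqrt n / 2 ≤ ∑ j ∈ range (n-1), u (1+j) := by
    set b : ℕ → ℝ := fun j => if j < m then α^(m-j) else α^(j+1-m) with hb
    have hpt : ∀ j ∈ range (n-1), b j ≤ u (1+j) := by
      intro j hj
      rw [Finset.mem_range] at hj
      have hαpow : (0:ℝ) < α ^ (1+j) := pow_pos hα0 _
      by_cases hjm : j < m
      · have hbj : b j = α^(m-j) := if_pos hjm
        have h1 : α^(m-j) ≤ x / α^(1+j) := by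
          rw [le_div_iff₀ hαpow]
          calc α^(m-j) * α^(1+j) = α^(m+1) := by rw [← pow_add]; congr 1; omega
          _ ≤ x := hPm1.le
        have hxle : x ≤ α^(1+j) := by
          calc x ≤ α^m := hPm
          _ ≤ α^(1+j) := pow_le_pow_of_le_one hα0.le hα1.le (by omega)
        have h2 : α^(m-j) ≤ α^(1+j) / x := by
          calc α^(m-j) ≤ 1 := pow_le_one₀ hα0.le hα1.le
          _ ≤ α^(1+j)/x := (one_le_div hx0).mpr hxle
        rw [hbj]
        exact le_min h1 h2
      · push_neg at hjm
        have hbj : b j = α^(j+1-m) := if_neg (by omega)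
        have hle : α^(1+j) ≤ x := by
          calc α^(1+j) ≤ α^(m+1) := pow_le_pow_of_le_one hα0.le hα1.le (by omega)
          _ ≤ x := hPm1.le
        have h1 : α^(j+1-m) ≤ α^(1+j) / x := by
          rw [le_div_iff₀ hx0]
          calc α^(j+1-m) * x ≤ α^(j+1-m) * α^m := by
                apply mul_le_mul_of_nonneg_left hPm (by positivity)
          _ = α^(1+j) := by rw [← pow_add]; congr 1; omega
        have h2 : α^(j+1-m) ≤ x / α^(1+j) := by
          calc α^(j+1-m) ≤ 1 := pow_le_one₀ hα0.le hα1.le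
          _ ≤ x / α^(1+j) := (one_le_div hαpow).mpr hle
        rw [hbj]
        exact le_min h2 h1
    have hmono : ∑ j ∈ range (n-1), b j ≤ ∑ j ∈ range (n-1), u (1+j) :=
      Finset.sum_le_sum hpt
    have hm1 : m ≤ n - 1 := by omega
    have hsplit : ∑ j ∈ range m, b j + ∑ j ∈ Ico m (n-1), b j = ∑ j ∈ range (n-1), b j :=
      Finset.sum_range_add_sum_Ico b hm1
    have hS1 : ∑ j ∈ range m, b j = ∑ j ∈ range m, α^(j+1) := by
      rw [← Finset.sum_range_reflect (fun j => α^(j+1)) m]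
      apply Finset.sum_congr rfl
      intro j hj
      rw [Finset.mem_range] at hj
      have hbj : b j = α^(m-j) := if_pos hj
      rw [hbj]
      congr 1
      omega
    have hS2 : ∑ j ∈ Ico m (n-1), b j = ∑ j ∈ range (n-1-m), α^(j+1) := by
      rw [Finset.sum_Ico_eq_sum_range]
      apply Finset.sum_congr rfl
      intro j hj
      rw [Finset.mem_range] at hj
      have hbj : b (m + j) = α^(m+j+1-m) := if_neg (by omega)
      rw [hbj]
      congr 1
      omega
    have hg1 := geom_sum_alpha α hαne m
    have hg2 := geom_sum_alpha α hαne (n-1-m)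
    have h1α : 0 < 1 - α := by linarith
    have hne : (n-1-m)+1 = n-m := by omega
    have hkey : α^(m+1) + α^(n-m) ≤ α + α^n := by
      have f1 : 0 ≤ α - α^(n-m) := by
        have : α^(n-m) ≤ α^1 := pow_le_pow_of_le_one hα0.le hα1.le (by omega)
        simpa using this
      have f2 : 0 ≤ 1 - α^m := by
        have := pow_le_one₀ hα0.le hα1.le (n := m); linarith
      have hpow1 : α^(n-m) * α^m = α^n := by rw [← pow_add]; congr 1; omega
      have hpow2 : α * α^m = α^(m+1) := by rw [← pow_succ']
      nlinarith [mul_nonneg f1 f2]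
    have h1a : 1 - α ≤ 1 / Real.sqrt n := by
      have h := Real.add_one_le_exp (-1 / Real.sqrt n)
      have h3 : -1 / Real.sqrt n + 1 ≤ α := by rw [hαdef, newmanAlpha]; exact h
      have h2 : -1 / Real.sqrt n = -(1/Real.sqrt n) := by ring
      rw [h2] at h3
      linarith
    have hhalf := half_le_alpha_sub n hn
    have hhalf' : (1:ℝ)/2 ≤ α - α^n := by
      rw [hαn, hαdef, newmanAlpha]; exact hhalf
    have hprodn : Real.sqrt n * (1 - α) ≤ 1 := by
      have h4 := mul_le_mul_of_nonneg_left h1a hsn.le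
      rwa [mul_one_div, div_self (ne_of_gt hsn)] at h4
    have hchain : Real.sqrt n / 2 ≤ (α - α^n)/(1-α) := by
      rw [div_le_div_iff₀ (by norm_num) h1α]
      nlinarith
    calc Real.sqrt n / 2 ≤ (α - α^n) / (1 - α) := hchain
    _ ≤ (2*α - α^(m+1) - α^(n-m)) / (1 - α) := by
        exact (div_le_div_iff_of_pos_right h1α).mpr (by linarith)
    _ = ∑ j ∈ range (n-1), b j := by
        rw [← hsplit, hS1, hS2, hg1, hg2, hne]
        field_simp
        ring
    _ ≤ ∑ j ∈ range (n-1), u (1+j) := hmono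
  -- product bound
  have hIcc : Finset.Icc 1 (n-1) = Finset.Ico 1 n := by
    rw [← Finset.Ico_add_one_right_eq_Icc]
    congr 1
    omega
  have habs : |newmanPoly n (-x)| = ∏ i ∈ Finset.Icc 1 (n-1), |α^i - x| := by
    rw [newmanPoly, Finset.abs_prod]
    apply Finset.prod_congr rfl
    intro i _
    congr 1
    ring
  have hNpos : 0 < newmanPoly n x := by
    rw [newmanPoly]; apply Finset.prod_pos; intro i _; positivity
  have hsum_eq : ∑ i ∈ Finset.Icc 1 (n-1), -(2 * u i)
      = -(2 * ∑ j ∈ range (n-1), u (1+j)) := by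
    rw [hIcc, Finset.sum_Ico_eq_sum_range]
    rw [Finset.mul_sum, ← Finset.sum_neg_distrib]
  have hprodle : |newmanPoly n (-x)|
      ≤ newmanPoly n x * Real.exp (-(2 * ∑ j ∈ range (n-1), u (1+j))) := by
    rw [habs, ← hsum_eq]
    calc ∏ i ∈ Icc 1 (n-1), |α^i - x|
        ≤ ∏ i ∈ Icc 1 (n-1), ((α^i + x) * Real.exp (-(2 * u i))) := by
          apply Finset.prod_le_prod
          · intro i _; exact abs_nonneg _
          · intro i _; exact factor_bound (α^i) x (pow_pos hα0 i) hx0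
    _ = (∏ i ∈ Icc 1 (n-1), (α^i + x)) * ∏ i ∈ Icc 1 (n-1), Real.exp (-(2 * u i)) :=
        Finset.prod_mul_distrib
    _ = newmanPoly n x * Real.exp (∑ i ∈ Icc 1 (n-1), -(2 * u i)) := by
        rw [← Real.exp_sum, newmanPoly]
        congr 1
        apply Finset.prod_congr rfl
        intro i _
        ring
  calc |newmanPoly n (-x)|
      ≤ newmanPoly n x * Real.exp (-(2 * ∑ j ∈ range (n-1), u (1+j))) := hprodle
  _ ≤ newmanPoly n x * Real.exp (-Real.sqrt n) := by
      apply mul_le_mul_of_nonneg_left (Real.exp_le_exp.mpr (by linarith)) hNpos.le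
  _ = Real.exp (-Real.sqrt n) * newmanPoly n x := mul_comm _ _

/-- Large-argument case in the proof of Lemma 1. -/
theorem newmanApprox_large_arg (n : ℕ) (hn : 5 ≤ n) (x : ℝ)
    (hx1 : Real.exp (-Real.sqrt n) < x) (hx2 : x ≤ 1) :
    |x - newmanApprox n x| ≤ 3 * Real.exp (-Real.sqrt n) := by
  set N := newmanPoly n x with hN
  set M := newmanPoly n (-x) with hM
  set ε := Real.exp (-Real.sqrt n) with hε
  have hε0 : 0 < ε := Real.exp_pos _
  have hx0 : 0 < x := lt_trans hε0 hx1
  have hcore : |M| ≤ ε * N := newman_core_s8 n hn x hx1 hx2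
  have hNpos : 0 < N := by
    rw [hN, newmanPoly]
    apply Finset.prod_pos
    intro i _
    have : (0:ℝ) < newmanAlpha n ^ i := pow_pos (Real.exp_pos _) _
    linarith
  -- ε ≤ 1/3
  have hεsmall : ε ≤ 1/3 := by
    have hn0 : (4:ℝ) ≤ (n:ℝ) := by
      have : (5:ℝ) ≤ (n:ℝ) := by exact_mod_cast hn
      linarith
    have h2 : (2:ℝ) ≤ Real.sqrt n := by
      rw [show (2:ℝ) = Real.sqrt 4 by rw [show (4:ℝ) = 2^2 by norm_num, Real.sqrt_sq]; norm_num]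
      exact Real.sqrt_le_sqrt hn0
    have h3 : ε ≤ Real.exp (-2) := by
      rw [hε]; apply Real.exp_le_exp.mpr; linarith
    have h4 : Real.exp (-2) ≤ 1/3 := by
      rw [Real.exp_neg]
      have h7 : (3:ℝ) ≤ Real.exp 2 := by
        have h5 := Real.exp_one_gt_d9
        have h6 : Real.exp 2 = Real.exp 1 * Real.exp 1 := by
          rw [← Real.exp_add]; norm_num
        nlinarith
      rw [show (1:ℝ)/3 = ((3:ℝ))⁻¹ by norm_num]
      exact inv_anti₀ (by norm_num) h7
    linarith
  have hMlb : -(ε*N) ≤ M := by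
    have := neg_abs_le M
    linarith [hcore]
  have hNM : 0 < N + M := by nlinarith
  have hdiff : x - newmanApprox n x = 2 * x * M / (N + M) := by
    rw [newmanApprox, ← hN, ← hM]
    field_simp
    ring
  rw [hdiff, abs_div, abs_of_pos hNM]
  rw [div_le_iff₀ hNM]
  have habs2 : |2 * x * M| = 2 * x * |M| := by
    rw [abs_mul, abs_of_pos (by linarith : (0:ℝ) < 2*x)]
  rw [habs2]
  -- 2x|M| ≤ 2|M| ≤ 2εN and 3ε(N+M) ≥ 3ε(1-ε)N ≥ 2εN
  have h1 : 2 * x * |M| ≤ 2 * (ε * N) := by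
    have habsM : 0 ≤ |M| := abs_nonneg _
    nlinarith
  have h2 : 2 * (ε * N) ≤ 3 * ε * (N + M) := by
    have hA := mul_le_mul_of_nonneg_left hMlb (by positivity : (0:ℝ) ≤ 3*ε)
    have hB : 0 ≤ (1 - 3*ε) * (ε * N) := by
      apply mul_nonneg (by linarith) (by positivity)
    nlinarith [hA, hB]
  linarith
end
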